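/- arXiv:2104.11047 — 5 statements merged into one kernel-verified Lean document; each statement's English description precedes it below -/
import Mathlib

section
/- Let p be as above. Then there exist positive constants c′, C′ and ρ such that c′|z|^{2k} ≤ Re p(z) ≤ C′|z|^{2k} for every z ∈ Γ_ρ, where Γ_ρ = {z = x + iy ∈ ℂ^N : |y| ≤ ρ|x|}. -/
open MeasureTheory Metric Complex Filter

noncomputable section

/-- The canonical embedding of `ℝ^N` into `ℂ^N`. -/
def cV {N : ℕ} (x : EuclideanSpace ℝ (Fin N)) : EuclideanSpace ℂ (Fin N) :=
  WithLp.toLp 2 (fun j => (x j : ℂ))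

/-- The real part of a vector in `ℂ^N`. -/
def reV {N : ℕ} (z : EuclideanSpace ℂ (Fin N)) : EuclideanSpace ℝ (Fin N) :=
  WithLp.toLp 2 (fun j => (z j).re)

/-- The imaginary part of a vector in `ℂ^N`. -/
def imV {N : ℕ} (z : EuclideanSpace ℂ (Fin N)) : EuclideanSpace ℝ (Fin N) :=
  WithLp.toLp 2 (fun j => (z j).im)

/-- `p` is a homogeneous polynomial of degree `2k` on `ℂ^N` with real coefficients. -/
def IsRealHomog {N : ℕ} (k : ℕ) (p : EuclideanSpace ℂ (Fin N) → ℂ) : Prop :=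
  ∃ (a : (Fin N → ℕ) → ℝ) (S : Finset (Fin N → ℕ)),
    (∀ α ∈ S, ∑ j, α j = 2 * k) ∧
    ∀ z : EuclideanSpace ℂ (Fin N), p z = ∑ α ∈ S, (a α : ℂ) * ∏ j, z j ^ α j

lemma norm_cV {N : ℕ} (x : EuclideanSpace ℝ (Fin N)) : ‖cV x‖ = ‖x‖ := by
  simp [EuclideanSpace.norm_eq, cV]

lemma cV_sub {N : ℕ} (x y : EuclideanSpace ℝ (Fin N)) : cV (x - y) = cV x - cV y := by
  ext j
  show ((x - y) j : ℂ) = x j - y j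
  push_cast [PiLp.sub_apply]
  ring

lemma norm_sub_cV_reV {N : ℕ} (z : EuclideanSpace ℂ (Fin N)) :
    ‖z - cV (reV z)‖ = ‖imV z‖ := by
  rw [EuclideanSpace.norm_eq, EuclideanSpace.norm_eq]
  congr 1
  apply Finset.sum_congr rfl
  intro j _
  have h1 : (z - cV (reV z)) j = ((z j).im : ℂ) * I := by
    show z j - ((z j).re : ℂ) = _
    linear_combination - Complex.re_add_im (z j)
  rw [h1]
  simp [imV]

lemma smul_apply' {N : ℕ} (t : ℝ) (z : EuclideanSpace ℂ (Fin N)) (j : Fin N) :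
    (t • z) j = (t : ℂ) * z j := by
  show t • z j = (t : ℂ) * z j
  rw [Complex.real_smul]

/-- The two-sided bound `c|x|^{2k} ≤ p(x) ≤ C|x|^{2k}` for real `x`
extends to a conic complex neighborhood `Γ_ρ = {x + iy : |y| ≤ ρ|x|}` of
`ℝ^N \ {0}`, for the real part of `p`. -/
theorem stmt1 (N k : ℕ) (hN : 1 ≤ N) (hk : 1 ≤ k)
    (p : EuclideanSpace ℂ (Fin N) → ℂ) (hp : IsRealHomog k p)
    (c C : ℝ) (hc : 0 < c) (hC : 0 < C)
    (hlow : ∀ x : EuclideanSpace ℝ (Fin N), c * ‖x‖ ^ (2 * k) ≤ (p (cV x)).re)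
    (hupp : ∀ x : EuclideanSpace ℝ (Fin N), (p (cV x)).re ≤ C * ‖x‖ ^ (2 * k)) :
    ∃ c' C' ρ : ℝ, 0 < c' ∧ 0 < C' ∧ 0 < ρ ∧
      ∀ z : EuclideanSpace ℂ (Fin N), ‖imV z‖ ≤ ρ * ‖reV z‖ →
        c' * ‖z‖ ^ (2 * k) ≤ (p z).re ∧ (p z).re ≤ C' * ‖z‖ ^ (2 * k) := by
  obtain ⟨a, S, hS, hform⟩ := hp
  have : Nonempty (Fin N) := ⟨⟨0, hN⟩⟩
  -- homogeneity
  have hhom : ∀ (t : ℝ) (z : EuclideanSpace ℂ (Fin N)),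
      p (t • z) = (t : ℂ) ^ (2 * k) * p z := by
    intro t z
    rw [hform, hform, Finset.mul_sum]
    apply Finset.sum_congr rfl
    intro α hα
    simp_rw [smul_apply', mul_pow, Finset.prod_mul_distrib,
      Finset.prod_pow_eq_pow_sum, hS α hα]
    ring
  -- continuity
  have hcont : Continuous p := by
    rw [show p = fun z => ∑ α ∈ S, (a α : ℂ) * ∏ j, z j ^ α j from funext hform]
    exact continuous_finset_sum _ fun α _ =>
      continuous_const.mul (continuous_finset_prod _ fun j _ =>
        ((EuclideanSpace.proj j).continuous.pow _))
  have hcVcont : Continuous (cV (N := N)) := by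
    have h2 : Continuous (fun x : EuclideanSpace ℝ (Fin N) =>
        (fun j => (x j : ℂ) : Fin N → ℂ)) :=
      continuous_pi fun j => Complex.continuous_ofReal.comp
        ((EuclideanSpace.proj j).continuous)
    exact (PiLp.continuous_toLp 2 (fun _ : Fin N => ℂ)).comp h2
  -- upper bound on sphere
  have hcs : IsCompact (sphere (0 : EuclideanSpace ℂ (Fin N)) 1) := isCompact_sphere _ _
  have hne : (sphere (0 : EuclideanSpace ℂ (Fin N)) 1).Nonempty :=
    NormedSpace.sphere_nonempty.2 zero_le_one
  obtain ⟨x₀, hx₀mem, hM⟩ := hcs.exists_isMaxOn hne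
    ((continuous_abs.comp (Complex.continuous_re.comp hcont)).continuousOn)
  set M := |(p x₀).re| with hMdef
  have hM0 : 0 ≤ M := abs_nonneg _
  -- lower bound via thickening
  set U : Set (EuclideanSpace ℂ (Fin N)) := {z | c / 2 < (p z).re} with hU
  have hUopen : IsOpen U := isOpen_lt continuous_const (Complex.continuous_re.comp hcont)
  set R : Set (EuclideanSpace ℂ (Fin N)) := cV '' sphere 0 1 with hR
  have hRcomp : IsCompact R := (isCompact_sphere _ _).image hcVcont
  have hRU : R ⊆ U := by
    rintro _ ⟨x, hx, rfl⟩
    have hx1 : ‖x‖ = 1 := by simpa using hx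
    have := hlow x
    rw [hx1, one_pow, mul_one] at this
    exact lt_of_lt_of_le (by linarith) this
  obtain ⟨δ, hδ, hsub⟩ := hRcomp.exists_cthickening_subset_open hUopen hRU
  refine ⟨c / 2, M + 1, min (δ / 8) (1 / 4), by linarith, by linarith,
    lt_min (by linarith) (by norm_num), ?_⟩
  set ρ := min (δ / 8) (1 / 4) with hρdef
  have hρ4 : ρ ≤ 1 / 4 := min_le_right _ _
  have hρδ : ρ ≤ δ / 8 := min_le_left _ _
  have hρ0 : 0 < ρ := lt_min (by linarith) (by norm_num)
  -- key claim on the unit sphere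
  have key : ∀ u : EuclideanSpace ℂ (Fin N), ‖u‖ = 1 → ‖imV u‖ ≤ ρ * ‖reV u‖ →
      c / 2 < (p u).re ∧ (p u).re ≤ M + 1 := by
    intro u hu hcone
    constructor
    · -- lower bound: u is within δ of R
      set x := reV u with hx
      set y := imV u with hy
      have h1 : ‖u - cV x‖ = ‖y‖ := norm_sub_cV_reV u
      have h2 : ‖x‖ ≤ 1 + ‖y‖ := by
        have : ‖cV x‖ ≤ ‖u‖ + ‖u - cV x‖ := by
          have := norm_sub_le u (u - cV x)
          simpa using this
        rw [norm_cV, hu, h1] at this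
        exact this
      have h3 : 1 - ‖y‖ ≤ ‖x‖ := by
        have : ‖u‖ - ‖u - cV x‖ ≤ ‖cV x‖ := by
          have := norm_sub_le (u - (u - cV x)) (u - cV x)
          simp only [sub_sub_cancel] at this
          have h' := norm_le_insert' u (cV x)
          nlinarith [norm_sub_le u (u - cV x), norm_nonneg (u - cV x)]
        rw [norm_cV, hu, h1] at this
        linarith
      have hy2ρ : ‖y‖ ≤ 2 * ρ := by
        have := hcone
        nlinarith [norm_nonneg y, norm_nonneg x]
      have hx0 : 0 < ‖x‖ := by nlinarith
      set w : EuclideanSpace ℂ (Fin N) := cV (‖x‖⁻¹ • x) with hw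
      have hwR : w ∈ R := by
        refine ⟨‖x‖⁻¹ • x, ?_, rfl⟩
        simp [norm_smul, abs_of_pos (inv_pos.2 hx0), inv_mul_cancel₀ hx0.ne']
      have hdist : dist u w ≤ δ := by
        have hd1 : dist u w ≤ ‖u - cV x‖ + ‖cV x - w‖ := by
          rw [dist_eq_norm]
          exact norm_sub_le_norm_sub_add_norm_sub u (cV x) w
        have hd2 : ‖cV x - w‖ = |‖x‖ - 1| := by
          rw [hw, ← cV_sub, norm_cV]
          have h5 : x - ‖x‖⁻¹ • x = (1 - ‖x‖⁻¹) • x := by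
            rw [sub_smul, one_smul]
          rw [h5, norm_smul, Real.norm_eq_abs]
          have h6 : |1 - ‖x‖⁻¹| * ‖x‖ = |(1 - ‖x‖⁻¹) * ‖x‖| := by
            rw [abs_mul, abs_of_pos hx0]
          rw [h6]
          congr 1
          field_simp
        have hd3 : |‖x‖ - 1| ≤ ‖y‖ := abs_sub_le_iff.2 ⟨by linarith, by linarith⟩
        rw [h1, hd2] at hd1
        calc dist u w ≤ ‖y‖ + |‖x‖ - 1| := hd1
          _ ≤ 2 * ‖y‖ := by linarith
          _ ≤ 4 * ρ := by linarith
          _ ≤ δ := by linarith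
      have : u ∈ cthickening δ R :=
        mem_cthickening_of_dist_le u w δ R hwR hdist
      exact hsub this
    · -- upper bound
      have : |(p u).re| ≤ M := hM (by simpa using hu : u ∈ sphere (0 : EuclideanSpace ℂ (Fin N)) 1)
      have := abs_le.1 this
      linarith [this.2]
  refine fun z hz => ?_
  rcases eq_or_ne z 0 with rfl | hz0
  · have hp0 : p 0 = 0 := by
      have h := hhom 0 0
      rw [smul_zero] at h
      simpa [zero_pow (show 2 * k ≠ 0 by positivity)] using h
    rw [hp0]
    simp [zero_pow (show 2 * k ≠ 0 by positivity)]
  · set t := ‖z‖ with ht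
    have ht0 : 0 < t := norm_pos_iff.2 hz0
    set u := t⁻¹ • z with hu
    have hun : ‖u‖ = 1 := by
      rw [hu, norm_smul, Real.norm_eq_abs, abs_of_pos (inv_pos.2 ht0),
        inv_mul_cancel₀ ht0.ne']
    have hre : reV u = t⁻¹ • reV z := by
      ext j
      show (t⁻¹ • z j).re = t⁻¹ * (z j).re
      rw [Complex.real_smul]
      simp
    have him : imV u = t⁻¹ • imV z := by
      ext j
      show (t⁻¹ • z j).im = t⁻¹ * (z j).im
      rw [Complex.real_smul]
      simp
    have hcone : ‖imV u‖ ≤ ρ * ‖reV u‖ := by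
      rw [hre, him, norm_smul, norm_smul, Real.norm_eq_abs,
        abs_of_pos (inv_pos.2 ht0)]
      calc t⁻¹ * ‖imV z‖ ≤ t⁻¹ * (ρ * ‖reV z‖) := by
            apply mul_le_mul_of_nonneg_left hz (le_of_lt (inv_pos.2 ht0))
        _ = ρ * (t⁻¹ * ‖reV z‖) := by ring
    obtain ⟨hl, hr⟩ := key u hun hcone
    have hzu : z = t • u := by
      rw [hu, smul_smul, mul_inv_cancel₀ ht0.ne', one_smul]
    have hpz : (p z).re = t ^ (2 * k) * (p u).re := by
      rw [hzu, hhom, ← Complex.ofReal_pow, Complex.re_ofReal_mul]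
    have htk : 0 < t ^ (2 * k) := pow_pos ht0 _
    constructor
    · rw [hpz]
      calc c / 2 * t ^ (2 * k) = t ^ (2 * k) * (c / 2) := by ring
        _ ≤ t ^ (2 * k) * (p u).re := mul_le_mul_of_nonneg_left hl.le htk.le
    · rw [hpz]
      calc t ^ (2 * k) * (p u).re ≤ t ^ (2 * k) * (M + 1) :=
            mul_le_mul_of_nonneg_left hr htk.le
        _ = (M + 1) * t ^ (2 * k) := by ring

end
end

section
/- Let p, c_p be as above, set Ψ(z) = c_p e^{−p(z)}, and let λ ∈ (0, 1/k). Then for every compact set K ⊂ ℝ^N, every δ > 0 and every ε ∈ (0,1) there exists M > 0 such that ∫_{ℝ^N} e^{−ε|ξ|²} ( ∫_{ℝ^N} |Ψ(|ξ|^λ (τ − w))| |ξ|^{λN} dτ ) dξ < M for all w ∈ K_δ. -/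
open MeasureTheory Metric Complex Filter
open scoped ENNReal

noncomputable section

/-! ### Auxiliary definitions and lemmas -/

/-- Real part of a vector in `ℂ^N`. -/
def reP {N : ℕ} (z : EuclideanSpace ℂ (Fin N)) : EuclideanSpace ℝ (Fin N) :=
  WithLp.toLp 2 (fun j => (z j).re)

/-- Imaginary part of a vector in `ℂ^N`. -/
def imP {N : ℕ} (z : EuclideanSpace ℂ (Fin N)) : EuclideanSpace ℝ (Fin N) :=
  WithLp.toLp 2 (fun j => (z j).im)

lemma coord_abs_le_norm {N : ℕ} (x : EuclideanSpace ℝ (Fin N)) (j : Fin N) :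
    |x j| ≤ ‖x‖ := by
  rw [EuclideanSpace.norm_eq]
  calc |x j| = Real.sqrt (|x j| ^ 2) := by rw [Real.sqrt_sq (abs_nonneg _)]
    _ ≤ Real.sqrt (∑ i, ‖x i‖ ^ 2) := by
        apply Real.sqrt_le_sqrt
        have : |x j| ^ 2 = ‖x j‖ ^ 2 := by rw [Real.norm_eq_abs]
        rw [this]
        exact Finset.single_le_sum (f := fun i => ‖x i‖ ^ 2)
          (fun i _ => sq_nonneg _) (Finset.mem_univ j)

lemma norm_imP_le {N : ℕ} (z : EuclideanSpace ℂ (Fin N)) : ‖imP z‖ ≤ ‖z‖ := by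
  rw [EuclideanSpace.norm_eq, EuclideanSpace.norm_eq]
  apply Real.sqrt_le_sqrt
  apply Finset.sum_le_sum
  intro i _
  have h : ‖imP z i‖ = |(z i).im| := by rfl
  rw [h]
  have h1 : |(z i).im| ≤ ‖z i‖ := Complex.abs_im_le_norm _
  have h2 : ‖z i‖ = ‖z i‖ := rfl
  rw [h2]
  exact pow_le_pow_left₀ (abs_nonneg _) h1 2

lemma norm_prod_le_pow {ι : Type*} (s : Finset ι) (f : ι → ℂ) (M : ℝ)
    (hf : ∀ i ∈ s, ‖f i‖ ≤ M) : ‖∏ i ∈ s, f i‖ ≤ M ^ s.card := by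
  classical
  induction s using Finset.induction_on with
  | empty => simp
  | @insert a s ha ih =>
    rw [Finset.prod_insert ha, Finset.card_insert_of_notMem ha, pow_succ']
    have h1 : ‖f a‖ ≤ M := hf a (Finset.mem_insert_self a s)
    have h2 := ih (fun i hi => hf i (Finset.mem_insert_of_mem hi))
    calc ‖f a * ∏ i ∈ s, f i‖ = ‖f a‖ * ‖∏ i ∈ s, f i‖ := norm_mul _ _
      _ ≤ M * M ^ s.card := by
          exact mul_le_mul h1 h2 (norm_nonneg _) ((norm_nonneg (f a)).trans h1)

lemma prod_sub_prod_bound {ι : Type*} (s : Finset ι) (f g : ι → ℂ) (M d : ℝ)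
    (hM : 0 ≤ M) (hd : 0 ≤ d)
    (hf : ∀ i ∈ s, ‖f i‖ ≤ M) (hg : ∀ i ∈ s, ‖g i‖ ≤ M)
    (hfg : ∀ i ∈ s, ‖f i - g i‖ ≤ d) :
    ‖∏ i ∈ s, f i - ∏ i ∈ s, g i‖ * M ≤ s.card * d * M ^ s.card := by
  classical
  induction s using Finset.induction_on with
  | empty => simp [hM]
  | @insert a s ha ih =>
    rw [Finset.prod_insert ha, Finset.prod_insert ha, Finset.card_insert_of_notMem ha]
    have key : f a * ∏ i ∈ s, f i - g a * ∏ i ∈ s, g i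
        = (f a - g a) * ∏ i ∈ s, f i + g a * (∏ i ∈ s, f i - ∏ i ∈ s, g i) := by ring
    have hfa : ‖f a‖ ≤ M := hf a (Finset.mem_insert_self a s)
    have hga : ‖g a‖ ≤ M := hg a (Finset.mem_insert_self a s)
    have hda : ‖f a - g a‖ ≤ d := hfg a (Finset.mem_insert_self a s)
    have hPf : ‖∏ i ∈ s, f i‖ ≤ M ^ s.card :=
      norm_prod_le_pow s f M (fun i hi => hf i (Finset.mem_insert_of_mem hi))
    have ih' := ih (fun i hi => hf i (Finset.mem_insert_of_mem hi))
      (fun i hi => hg i (Finset.mem_insert_of_mem hi))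
      (fun i hi => hfg i (Finset.mem_insert_of_mem hi))
    have step : ‖f a * ∏ i ∈ s, f i - g a * ∏ i ∈ s, g i‖
        ≤ d * M ^ s.card + M * ‖∏ i ∈ s, f i - ∏ i ∈ s, g i‖ := by
      rw [key]
      calc ‖(f a - g a) * ∏ i ∈ s, f i + g a * (∏ i ∈ s, f i - ∏ i ∈ s, g i)‖
          ≤ ‖(f a - g a) * ∏ i ∈ s, f i‖ + ‖g a * (∏ i ∈ s, f i - ∏ i ∈ s, g i)‖ :=
            norm_add_le _ _
        _ ≤ d * M ^ s.card + M * ‖∏ i ∈ s, f i - ∏ i ∈ s, g i‖ := by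
            rw [norm_mul, norm_mul]
            gcongr
    calc ‖f a * ∏ i ∈ s, f i - g a * ∏ i ∈ s, g i‖ * M
        ≤ (d * M ^ s.card + M * ‖∏ i ∈ s, f i - ∏ i ∈ s, g i‖) * M := by
          exact mul_le_mul_of_nonneg_right step hM
      _ = d * M ^ (s.card + 1) + (‖∏ i ∈ s, f i - ∏ i ∈ s, g i‖ * M) * M := by ring
      _ ≤ d * M ^ (s.card + 1) + (s.card * d * M ^ s.card) * M :=
          add_le_add_right (mul_le_mul_of_nonneg_right ih' hM) _
      _ = (s.card + 1 : ℕ) * d * M ^ (s.card + 1) := by push_cast; ring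

lemma monomial_diff_bound {N k : ℕ} (z : EuclideanSpace ℂ (Fin N)) (α : Fin N → ℕ)
    (hα : ∑ j, α j = 2 * k) :
    ‖(∏ j, z j ^ α j) - ∏ j, ((reP z j : ℝ) : ℂ) ^ α j‖ * (‖reP z‖ + ‖imP z‖)
      ≤ (2 * k) * ‖imP z‖ * (‖reP z‖ + ‖imP z‖) ^ (2 * k) := by
  classical
  set x := reP z
  set y := imP z
  set M := ‖x‖ + ‖y‖ with hM
  have hM0 : 0 ≤ M := by positivity
  set s : Finset ((_ : Fin N) × ℕ) := Finset.univ.sigma (fun j => Finset.range (α j)) with hs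
  have hcard : s.card = 2 * k := by
    rw [hs, Finset.card_sigma]
    simpa using hα
  have hprodf : ∏ q ∈ s, z q.1 = ∏ j, z j ^ α j := by
    rw [hs, Finset.prod_sigma]
    simp [Finset.prod_const]
  have hprodg : ∏ q ∈ s, ((x q.1 : ℝ) : ℂ) = ∏ j, ((x j : ℝ) : ℂ) ^ α j := by
    rw [hs, Finset.prod_sigma]
    simp [Finset.prod_const]
  have key := prod_sub_prod_bound s (fun q => z q.1) (fun q => ((x q.1 : ℝ) : ℂ)) M ‖y‖
    hM0 (norm_nonneg _)
    (fun q _ => by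
      calc ‖z q.1‖ = ‖z q.1‖ := rfl
        _ ≤ |(z q.1).re| + |(z q.1).im| := Complex.norm_le_abs_re_add_abs_im _
        _ ≤ ‖x‖ + ‖y‖ := add_le_add (coord_abs_le_norm x q.1) (coord_abs_le_norm y q.1))
    (fun q _ => by
      calc ‖((x q.1 : ℝ) : ℂ)‖ = |x q.1| := by rw [Complex.norm_real, Real.norm_eq_abs]
        _ ≤ ‖x‖ := coord_abs_le_norm x q.1
        _ ≤ M := by rw [hM]; nlinarith [norm_nonneg y])
    (fun q _ => by
      have hz : z q.1 - ((x q.1 : ℝ) : ℂ) = ((y q.1 : ℝ) : ℂ) * Complex.I := by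
        apply Complex.ext <;> simp [x, y, reP, imP]
      rw [hz]
      calc ‖((y q.1 : ℝ) : ℂ) * Complex.I‖ = |y q.1| := by
            rw [norm_mul, Complex.norm_I, Complex.norm_real, Real.norm_eq_abs, mul_one]
        _ ≤ ‖y‖ := coord_abs_le_norm y q.1)
  rw [hprodf, hprodg, hcard] at key
  calc ‖(∏ j, z j ^ α j) - ∏ j, ((x j : ℝ) : ℂ) ^ α j‖ * M
      ≤ (2 * k : ℕ) * ‖y‖ * M ^ (2 * k) := key
    _ = (2 * k) * ‖y‖ * M ^ (2 * k) := by push_cast; ring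

lemma rep_lower {N k : ℕ} (hk : 1 ≤ k) (p : EuclideanSpace ℂ (Fin N) → ℂ)
    (hp : IsRealHomog k p) (c : ℝ) (hc : 0 < c)
    (hlow : ∀ x : EuclideanSpace ℝ (Fin N), c * ‖x‖ ^ (2 * k) ≤ (p (cV x)).re) :
    ∃ A : ℝ, 0 ≤ A ∧ ∀ z : EuclideanSpace ℂ (Fin N),
      c * ‖reP z‖ ^ (2 * k)
        - A * ‖imP z‖ * (‖reP z‖ + ‖imP z‖) ^ (2 * k - 1) ≤ (p z).re := by
  classical
  obtain ⟨a, S, hdeg, hrep⟩ := hp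
  refine ⟨(2 * k) * ∑ α ∈ S, |a α|, by positivity, fun z => ?_⟩
  set x := reP z with hx
  set y := imP z with hy
  set M := ‖x‖ + ‖y‖ with hMdef
  have hM0 : 0 ≤ M := by positivity
  have hdiff : ‖p z - p (cV x)‖ * M ≤ ((2 * k) * ∑ α ∈ S, |a α|) * ‖y‖ * M ^ (2 * k) := by
    rw [hrep z, hrep (cV x)]
    have : (∑ α ∈ S, (a α : ℂ) * ∏ j, z j ^ α j)
        - ∑ α ∈ S, (a α : ℂ) * ∏ j, (cV x) j ^ α j
        = ∑ α ∈ S, (a α : ℂ) * ((∏ j, z j ^ α j) - ∏ j, ((x j : ℝ) : ℂ) ^ α j) := by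
      rw [← Finset.sum_sub_distrib]
      congr 1
      funext α
      rw [← mul_sub]
      rfl
    rw [this]
    calc ‖∑ α ∈ S, (a α : ℂ) * ((∏ j, z j ^ α j) - ∏ j, ((x j : ℝ) : ℂ) ^ α j)‖ * M
        ≤ (∑ α ∈ S, |a α| * ‖(∏ j, z j ^ α j) - ∏ j, ((x j : ℝ) : ℂ) ^ α j‖) * M := by
          apply mul_le_mul_of_nonneg_right _ hM0
          refine (norm_sum_le _ _).trans ?_
          apply Finset.sum_le_sum
          intro α _
          rw [norm_mul, Complex.norm_real, Real.norm_eq_abs]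
      _ = ∑ α ∈ S, |a α| * (‖(∏ j, z j ^ α j) - ∏ j, ((x j : ℝ) : ℂ) ^ α j‖ * M) := by
          rw [Finset.sum_mul]; congr 1; ext α; ring
      _ ≤ ∑ α ∈ S, |a α| * ((2 * k) * ‖y‖ * M ^ (2 * k)) := by
          apply Finset.sum_le_sum
          intro α hα
          exact mul_le_mul_of_nonneg_left (monomial_diff_bound z α (hdeg α hα)) (abs_nonneg _)
      _ = ((2 * k) * ∑ α ∈ S, |a α|) * ‖y‖ * M ^ (2 * k) := by
          rw [← Finset.sum_mul]; ring
  set A := (2 * k : ℝ) * ∑ α ∈ S, |a α| with hA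
  have hre : (p (cV x)).re - (p z).re ≤ ‖p z - p (cV x)‖ := by
    have h1 : (p (cV x)).re - (p z).re = (p (cV x) - p z).re := by simp [Complex.sub_re]
    rw [h1, ← norm_neg (p z - p (cV x)), neg_sub]
    exact (Complex.abs_re_le_norm _).trans' (le_abs_self _)
  by_cases hy0 : y = 0
  · have hzx : z = cV x := by
      refine PiLp.ext fun j => ?_
      apply Complex.ext
      · rfl
      · have : (z j).im = y j := rfl
        rw [this, hy0]; rfl
    rw [hzx, hy0]
    simp only [norm_zero, mul_zero, zero_mul, sub_zero]
    exact hlow x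
  · have hyn : 0 < ‖y‖ := norm_pos_iff.mpr hy0
    have hMpos : 0 < M := by rw [hMdef]; nlinarith [norm_nonneg x]
    have hMk : M ^ (2 * k) = M ^ (2 * k - 1) * M := by
      rw [← pow_succ, Nat.sub_add_cancel (by omega)]
    have step : (c * ‖x‖ ^ (2 * k) - (p z).re) * M ≤ (A * ‖y‖ * M ^ (2 * k - 1)) * M := by
      calc (c * ‖x‖ ^ (2 * k) - (p z).re) * M
          ≤ ((p (cV x)).re - (p z).re) * M :=
            mul_le_mul_of_nonneg_right (by linarith [hlow x]) hM0
        _ ≤ ‖p z - p (cV x)‖ * M := mul_le_mul_of_nonneg_right hre hM0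
        _ ≤ A * ‖y‖ * M ^ (2 * k) := hdiff
        _ = (A * ‖y‖ * M ^ (2 * k - 1)) * M := by rw [hMk]; ring
    have := le_of_mul_le_mul_right step hMpos
    linarith

lemma young1 (k : ℕ) (hk : 1 ≤ k) (A c : ℝ) (hA : 0 ≤ A) (hc : 0 < c) :
    ∃ D : ℝ, 0 ≤ D ∧ ∀ x y : ℝ, 0 ≤ x → 0 ≤ y →
      A * y * (x + y) ^ (2 * k - 1) ≤ c / 2 * x ^ (2 * k) + D * y ^ (2 * k) := by
  set B : ℝ := A * 2 ^ (2 * k - 1) + 1 with hB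
  have hB0 : 0 < B := by positivity
  set η : ℝ := min 1 (c / (2 * B)) with hη
  have hη0 : 0 < η := lt_min one_pos (by positivity)
  have hη1 : η ≤ 1 := min_le_left _ _
  have hηc : B * η ≤ c / 2 := by
    have : η ≤ c / (2 * B) := min_le_right _ _
    calc B * η ≤ B * (c / (2 * B)) := by
          exact mul_le_mul_of_nonneg_left this hB0.le
      _ = c / 2 := by field_simp
  refine ⟨A * (1 + 1 / η) ^ (2 * k - 1), by positivity, fun x y hx hy => ?_⟩
  have hpow : ∀ t : ℝ, 0 ≤ t → t ^ (2 * k - 1) * t = t ^ (2 * k) := by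
    intro t _
    rw [← pow_succ, Nat.sub_add_cancel (by omega)]
  by_cases hcase : y ≤ η * x
  · have h1 : x + y ≤ 2 * x := by nlinarith
    have h2 : A * y * (x + y) ^ (2 * k - 1) ≤ A * y * (2 * x) ^ (2 * k - 1) := by
      apply mul_le_mul_of_nonneg_left (pow_le_pow_left₀ (by positivity) h1 _) (by positivity)
    have h3 : A * y * (2 * x) ^ (2 * k - 1) = (A * 2 ^ (2 * k - 1)) * y * x ^ (2 * k - 1) := by
      rw [mul_pow]; ring
    have h4 : (A * 2 ^ (2 * k - 1)) * y * x ^ (2 * k - 1) ≤ B * (η * x) * x ^ (2 * k - 1) := by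
      apply mul_le_mul_of_nonneg_right _ (by positivity)
      apply mul_le_mul (by rw [hB]; nlinarith [pow_nonneg (by norm_num : (0:ℝ) ≤ 2) (2*k-1)])
        hcase hy hB0.le
    have h5 : B * (η * x) * x ^ (2 * k - 1) = (B * η) * (x ^ (2 * k - 1) * x) := by ring
    have h6 : (B * η) * (x ^ (2 * k - 1) * x) ≤ (c / 2) * x ^ (2 * k) := by
      rw [hpow x hx]
      exact mul_le_mul_of_nonneg_right hηc (by positivity)
    have hD : 0 ≤ A * (1 + 1 / η) ^ (2 * k - 1) * y ^ (2 * k) := by positivity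
    have chain : A * y * (x + y) ^ (2 * k - 1) ≤ c / 2 * x ^ (2 * k) :=
      h2.trans (h3 ▸ (h4.trans (h5 ▸ h6)))
    linarith
  · push_neg at hcase
    have hx' : x ≤ y / η := by
      rw [le_div_iff₀ hη0]
      nlinarith
    have h1 : x + y ≤ y * (1 + 1 / η) := by
      have : y / η = y * (1 / η) := by ring
      nlinarith [this ▸ hx']
    have h2 : A * y * (x + y) ^ (2 * k - 1) ≤ A * y * (y * (1 + 1 / η)) ^ (2 * k - 1) :=
      mul_le_mul_of_nonneg_left (pow_le_pow_left₀ (by positivity) h1 _) (by positivity)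
    have h3 : A * y * (y * (1 + 1 / η)) ^ (2 * k - 1)
        = (A * (1 + 1 / η) ^ (2 * k - 1)) * (y ^ (2 * k - 1) * y) := by
      rw [mul_pow]; ring
    rw [hpow y hy] at h3
    nlinarith [pow_nonneg hx (2 * k)]

lemma young2 (B a ε' : ℝ) (hB : 0 ≤ B) (ha0 : 0 ≤ a) (ha : a < 2) (hε : 0 < ε') :
    ∃ E : ℝ, 0 ≤ E ∧ ∀ s : ℝ, 0 ≤ s → B * s ^ a ≤ ε' * s ^ (2 : ℕ) + E := by
  set R : ℝ := max 1 ((2 * B / ε') ^ (1 / (2 - a))) with hR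
  have hR1 : (1 : ℝ) ≤ R := le_max_left _ _
  have hR0 : 0 < R := lt_of_lt_of_le one_pos hR1
  refine ⟨B * R ^ a, by positivity, fun s hs => ?_⟩
  by_cases hcase : s ≤ R
  · have : B * s ^ a ≤ B * R ^ a :=
      mul_le_mul_of_nonneg_left (Real.rpow_le_rpow hs hcase ha0) hB
    nlinarith [sq_nonneg s, mul_nonneg hε.le (sq_nonneg s)]
  · push_neg at hcase
    have hsR : R ≤ s := hcase.le
    have hs0 : 0 < s := lt_of_lt_of_le hR0 hsR
    have key : B ≤ ε' * s ^ (2 - a) := by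
      have h1 : (2 * B / ε') ^ (1 / (2 - a)) ≤ R := le_max_right _ _
      have h2 : (2 * B / ε') ≤ R ^ (2 - a) := by
        have hpos : (0:ℝ) ≤ 2 * B / ε' := by positivity
        have h := Real.rpow_le_rpow (Real.rpow_nonneg hpos _) h1 (by linarith : (0:ℝ) ≤ 2 - a)
        have heq : ((2 * B / ε') ^ (1 / (2 - a))) ^ ((2:ℝ) - a) = 2 * B / ε' := by
          rw [← Real.rpow_mul hpos, one_div,
            inv_mul_cancel₀ (by intro h0; linarith : (2:ℝ) - a ≠ 0), Real.rpow_one]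
        rwa [heq] at h
      have h3 : R ^ (2 - a) ≤ s ^ (2 - a) :=
        Real.rpow_le_rpow hR0.le hsR (by linarith)
      calc B ≤ 2 * B := by linarith
        _ = ε' * (2 * B / ε') := by field_simp
        _ ≤ ε' * s ^ (2 - a) := by
            apply mul_le_mul_of_nonneg_left (le_trans h2 h3) hε.le
    have : B * s ^ a ≤ (ε' * s ^ (2 - a)) * s ^ a :=
      mul_le_mul_of_nonneg_right key (Real.rpow_nonneg hs _)
    have heq : (ε' * s ^ (2 - a)) * s ^ a = ε' * s ^ (2 : ℕ) := by
      rw [mul_assoc, ← Real.rpow_add hs0, show (2 - a) + a = ((2:ℕ):ℝ) by push_cast; ring,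
        Real.rpow_natCast]
    nlinarith [Real.rpow_nonneg hs0.le a, mul_nonneg hB (Real.rpow_nonneg hR0.le a)]

lemma gauss_fin (N : ℕ) (b : ℝ) (hb : 0 < b) :
    ∫⁻ x : EuclideanSpace ℝ (Fin N), ENNReal.ofReal (Real.exp (-(b * ‖x‖ ^ 2))) < ⊤ := by
  have h : Integrable (fun v : EuclideanSpace ℝ (Fin N) =>
      Complex.exp (-(b : ℂ) * ‖v‖ ^ 2
        + 0 * ((inner ℝ (0 : EuclideanSpace ℝ (Fin N)) v : ℝ) : ℂ))) :=
    GaussianFourier.integrable_cexp_neg_mul_sq_norm_add (by simpa using hb) 0 0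
  have h2 : Integrable (fun v : EuclideanSpace ℝ (Fin N) => Real.exp (-(b * ‖v‖ ^ 2))) := by
    have := h.norm
    refine this.congr (Filter.Eventually.of_forall fun v => ?_)
    simp only
    rw [Complex.norm_exp]
    congr 1
    simp [Complex.add_re, Complex.mul_re]
    exact Or.inl (by norm_cast)
  calc ∫⁻ x : EuclideanSpace ℝ (Fin N), ENNReal.ofReal (Real.exp (-(b * ‖x‖ ^ 2)))
      = ∫⁻ x : EuclideanSpace ℝ (Fin N), ‖Real.exp (-(b * ‖x‖ ^ 2))‖₊ := by
        congr 1; funext x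
        rw [← Real.enorm_eq_ofReal (Real.exp_nonneg _), enorm_eq_nnnorm]
    _ < ⊤ := h2.2

lemma I0_fin (N k : ℕ) (hk : 1 ≤ k) (b : ℝ) (hb : 0 < b) :
    ∫⁻ s : EuclideanSpace ℝ (Fin N), ENNReal.ofReal (Real.exp (-(b * ‖s‖ ^ (2 * k)))) < ⊤ := by
  have hpt : ∀ s : EuclideanSpace ℝ (Fin N),
      Real.exp (-(b * ‖s‖ ^ (2 * k))) ≤ Real.exp b * Real.exp (-(b * ‖s‖ ^ 2)) := by
    intro s
    rw [← Real.exp_add]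
    apply Real.exp_le_exp.mpr
    by_cases hs : ‖s‖ ≤ 1
    · have h1 : b * ‖s‖ ^ (2 * k) ≥ 0 := by positivity
      have h2 : ‖s‖ ^ 2 ≤ 1 := pow_le_one₀ (norm_nonneg _) hs
      nlinarith
    · push_neg at hs
      have h1 : ‖s‖ ^ 2 ≤ ‖s‖ ^ (2 * k) := pow_le_pow_right₀ hs.le (by omega)
      nlinarith
  calc ∫⁻ s : EuclideanSpace ℝ (Fin N), ENNReal.ofReal (Real.exp (-(b * ‖s‖ ^ (2 * k))))
      ≤ ∫⁻ s : EuclideanSpace ℝ (Fin N),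
          ENNReal.ofReal (Real.exp b) * ENNReal.ofReal (Real.exp (-(b * ‖s‖ ^ 2))) := by
        apply lintegral_mono
        intro s
        simp only
        rw [← ENNReal.ofReal_mul (Real.exp_nonneg b)]
        exact ENNReal.ofReal_le_ofReal (hpt s)
    _ = ENNReal.ofReal (Real.exp b)
          * ∫⁻ s : EuclideanSpace ℝ (Fin N), ENNReal.ofReal (Real.exp (-(b * ‖s‖ ^ 2))) :=
        lintegral_const_mul' _ _ ENNReal.ofReal_ne_top
    _ < ⊤ := ENNReal.mul_lt_top ENNReal.ofReal_lt_top (gauss_fin N b hb)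

lemma scale_lintegral {N : ℕ} (f : EuclideanSpace ℝ (Fin N) → ℝ≥0∞) (hf : Measurable f)
    (t : ℝ) (ht : t ≠ 0) :
    ∫⁻ x : EuclideanSpace ℝ (Fin N), f (t • x)
      = ENNReal.ofReal |(t ^ N)⁻¹| * ∫⁻ x, f x := by
  have hmap := MeasureTheory.Measure.map_addHaar_smul
    (μ := (volume : Measure (EuclideanSpace ℝ (Fin N)))) (r := t) ht
  rw [finrank_euclideanSpace_fin] at hmap
  calc ∫⁻ x : EuclideanSpace ℝ (Fin N), f (t • x)
      = ∫⁻ y, f y ∂(Measure.map (t • ·) volume) :=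
        (lintegral_map hf (measurable_const_smul t)).symm
    _ = ENNReal.ofReal |(t ^ N)⁻¹| * ∫⁻ x, f x := by
        rw [hmap, lintegral_smul_measure, smul_eq_mul]

lemma inner_calc {N : ℕ} (t b : ℝ) (ht : 0 < t) (m : ℕ)
    (u : EuclideanSpace ℝ (Fin N)) :
    ∫⁻ τ : EuclideanSpace ℝ (Fin N),
        ENNReal.ofReal (Real.exp (-(b * (t * ‖τ - u‖) ^ m))) * ENNReal.ofReal (t ^ N)
      = ∫⁻ s : EuclideanSpace ℝ (Fin N), ENNReal.ofReal (Real.exp (-(b * ‖s‖ ^ m))) := by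
  have hf0 : Measurable fun s : EuclideanSpace ℝ (Fin N) =>
      ENNReal.ofReal (Real.exp (-(b * ‖s‖ ^ m))) := by
    apply Measurable.ennreal_ofReal
    exact (Real.continuous_exp.comp
      ((continuous_const.mul ((continuous_norm.pow m))).neg)).measurable
  have htN : (0:ℝ) < t ^ N := pow_pos ht N
  calc ∫⁻ τ : EuclideanSpace ℝ (Fin N),
        ENNReal.ofReal (Real.exp (-(b * (t * ‖τ - u‖) ^ m))) * ENNReal.ofReal (t ^ N)
      = (∫⁻ τ : EuclideanSpace ℝ (Fin N),
          ENNReal.ofReal (Real.exp (-(b * (t * ‖τ - u‖) ^ m)))) * ENNReal.ofReal (t ^ N) :=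
        lintegral_mul_const' _ _ ENNReal.ofReal_ne_top
    _ = (∫⁻ τ : EuclideanSpace ℝ (Fin N),
          ENNReal.ofReal (Real.exp (-(b * (t * ‖τ‖) ^ m)))) * ENNReal.ofReal (t ^ N) := by
        congr 1
        have := lintegral_add_right_eq_self
          (μ := (volume : Measure (EuclideanSpace ℝ (Fin N))))
          (fun τ => ENNReal.ofReal (Real.exp (-(b * (t * ‖τ‖) ^ m)))) (-u)
        simp_rw [← sub_eq_add_neg] at this
        exact this
    _ = (∫⁻ τ : EuclideanSpace ℝ (Fin N),
          ENNReal.ofReal (Real.exp (-(b * ‖t • τ‖ ^ m)))) * ENNReal.ofReal (t ^ N) := by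
        congr 1
        apply lintegral_congr
        intro τ
        rw [norm_smul, Real.norm_eq_abs, abs_of_pos ht]
    _ = (ENNReal.ofReal |(t ^ N)⁻¹| * ∫⁻ s, ENNReal.ofReal (Real.exp (-(b * ‖s‖ ^ m))))
          * ENNReal.ofReal (t ^ N) := by
        rw [scale_lintegral _ hf0 t ht.ne']
    _ = ∫⁻ s : EuclideanSpace ℝ (Fin N), ENNReal.ofReal (Real.exp (-(b * ‖s‖ ^ m))) := by
        rw [mul_comm, ← mul_assoc, abs_of_pos (by positivity : (0:ℝ) < (t ^ N)⁻¹),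
          ← ENNReal.ofReal_mul htN.le, mul_inv_cancel₀ htN.ne', ENNReal.ofReal_one, one_mul]

lemma psi_bound (N k : ℕ) (hk : 1 ≤ k) (p : EuclideanSpace ℂ (Fin N) → ℂ)
    (hp : IsRealHomog k p) (c : ℝ) (hc : 0 < c)
    (hlow : ∀ x : EuclideanSpace ℝ (Fin N), c * ‖x‖ ^ (2 * k) ≤ (p (cV x)).re)
    (cp : ℝ) (hcp : 0 < cp)
    (Ψ : EuclideanSpace ℂ (Fin N) → ℂ)
    (hΨ : ∀ z, Ψ z = (cp : ℂ) * Complex.exp (-(p z))) :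
    ∃ D : ℝ, 0 ≤ D ∧ ∀ (w : EuclideanSpace ℂ (Fin N)) (τ : EuclideanSpace ℝ (Fin N))
      (t : ℝ), 0 ≤ t →
      ‖Ψ (t • (cV τ - w))‖ ≤ cp * Real.exp (D * (t * ‖imP w‖) ^ (2 * k))
        * Real.exp (-(c / 2 * (t * ‖τ - reP w‖) ^ (2 * k))) := by
  obtain ⟨A, hA0, hAb⟩ := rep_lower hk p hp c hc hlow
  obtain ⟨D, hD0, hDy⟩ := young1 k hk A c hA0 hc
  refine ⟨D, hD0, fun w τ t ht => ?_⟩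
  set z : EuclideanSpace ℂ (Fin N) := t • (cV τ - w) with hz
  have hre : reP z = t • (τ - reP w) := by
    refine PiLp.ext fun j => ?_
    simp [hz, reP, cV, PiLp.smul_apply, PiLp.sub_apply, Complex.smul_re]
  have him : imP z = t • (-(imP w)) := by
    refine PiLp.ext fun j => ?_
    simp [hz, imP, cV, PiLp.smul_apply, PiLp.sub_apply, PiLp.neg_apply, Complex.smul_im]
  have hxn : ‖reP z‖ = t * ‖τ - reP w‖ := by
    rw [hre, norm_smul, Real.norm_eq_abs, _root_.abs_of_nonneg ht]
  have hyn : ‖imP z‖ = t * ‖imP w‖ := by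
    rw [him, norm_smul, norm_neg, Real.norm_eq_abs, _root_.abs_of_nonneg ht]
  have h1 := hAb z
  have h2 := hDy ‖reP z‖ ‖imP z‖ (norm_nonneg _) (norm_nonneg _)
  have hrep : -(p z).re ≤ D * ‖imP z‖ ^ (2 * k) - c / 2 * ‖reP z‖ ^ (2 * k) := by
    nlinarith [h1, h2]
  have hnorm : ‖Ψ z‖ = cp * Real.exp (-(p z).re) := by
    rw [hΨ z, norm_mul, Complex.norm_real, Real.norm_eq_abs, abs_of_pos hcp,
      Complex.norm_exp, Complex.neg_re]
  rw [hnorm, mul_assoc, ← Real.exp_add]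
  apply mul_le_mul_of_nonneg_left _ hcp.le
  apply Real.exp_le_exp.mpr
  rw [← hxn, ← hyn]
  linarith

/-- Integrability condition (property (1) of a good phase function) for
`Ψ(z) = c_p e^{-p(z)}` and `λ ∈ (0, 1/k)`. -/
theorem stmt2 (N k : ℕ) (hN : 1 ≤ N) (hk : 1 ≤ k)
    (p : EuclideanSpace ℂ (Fin N) → ℂ) (hp : IsRealHomog k p)
    (c C : ℝ) (hc : 0 < c) (hC : 0 < C)
    (hlow : ∀ x : EuclideanSpace ℝ (Fin N), c * ‖x‖ ^ (2 * k) ≤ (p (cV x)).re)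
    (hupp : ∀ x : EuclideanSpace ℝ (Fin N), (p (cV x)).re ≤ C * ‖x‖ ^ (2 * k))
    (cp : ℝ) (hcp : 0 < cp)
    (hcpdef : cp⁻¹ = ∫ x : EuclideanSpace ℝ (Fin N), Real.exp (-(p (cV x)).re))
    (Ψ : EuclideanSpace ℂ (Fin N) → ℂ)
    (hΨ : ∀ z, Ψ z = (cp : ℂ) * Complex.exp (-(p z)))
    (lam : ℝ) (hlam : lam ∈ Set.Ioo (0 : ℝ) (1 / (k : ℝ))) :
    ∀ K : Set (EuclideanSpace ℝ (Fin N)), IsCompact K →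
      ∀ δ > (0 : ℝ), ∀ ε ∈ Set.Ioo (0 : ℝ) 1, ∃ M > (0 : ℝ),
        ∀ w ∈ Metric.thickening δ (cV '' K),
          (∫⁻ ξ : EuclideanSpace ℝ (Fin N),
              ENNReal.ofReal (Real.exp (-ε * ‖ξ‖ ^ 2)) *
                ∫⁻ τ : EuclideanSpace ℝ (Fin N),
                  (‖Ψ ((‖ξ‖ ^ lam) • (cV τ - w))‖₊ : ℝ≥0∞) *
                    ENNReal.ofReal (‖ξ‖ ^ (lam * N))) < ENNReal.ofReal M := by
  obtain ⟨hlam0, hlam1⟩ := hlam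
  intro K hK δ hδ ε hε
  obtain ⟨hε0, hε1⟩ := hε
  have hkR : (0:ℝ) < (k:ℝ) := by exact_mod_cast hk
  have hNR : (0:ℝ) < (N:ℝ) := by exact_mod_cast hN
  obtain ⟨D, hD0, hDb⟩ := psi_bound N k hk p hp c hc hlow cp hcp Ψ hΨ
  have hc2 : (0:ℝ) < c / 2 := by linarith
  set I₀ : ℝ≥0∞ :=
    ∫⁻ s : EuclideanSpace ℝ (Fin N), ENNReal.ofReal (Real.exp (-(c / 2 * ‖s‖ ^ (2 * k))))
    with hI₀def
  have hI₀ : I₀ < ⊤ := I0_fin N k hk (c/2) hc2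
  set a : ℝ := lam * ((2 * k : ℕ) : ℝ) with hadef
  have ha0 : 0 ≤ a := by positivity
  have ha2 : a < 2 := by
    rw [hadef]
    push_cast
    calc lam * (2 * (k:ℝ)) < (1 / (k:ℝ)) * (2 * (k:ℝ)) := by
          apply mul_lt_mul_of_pos_right hlam1 (by positivity)
      _ = 2 := by field_simp
  obtain ⟨Ey, hEy0, hEyb⟩ :=
    young2 (D * δ ^ (2 * k)) a (ε / 2) (by positivity) ha0 ha2 (by linarith)
  set G : ℝ≥0∞ :=
    ∫⁻ ξ : EuclideanSpace ℝ (Fin N), ENNReal.ofReal (Real.exp (-(ε / 2 * ‖ξ‖ ^ 2))) with hGdef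
  have hG : G < ⊤ := gauss_fin N (ε/2) (by linarith)
  have hcon : ENNReal.ofReal (cp * Real.exp Ey) * I₀ ≠ ⊤ :=
    ENNReal.mul_ne_top ENNReal.ofReal_ne_top hI₀.ne
  set T : ℝ≥0∞ := (ENNReal.ofReal (cp * Real.exp Ey) * I₀) * G with hTdef
  have hTne : T ≠ ⊤ := ENNReal.mul_ne_top hcon hG.ne
  have hT0 : (0:ℝ) ≤ T.toReal := ENNReal.toReal_nonneg
  refine ⟨T.toReal + 1, by linarith, fun w hw => ?_⟩
  have hv : ‖imP w‖ ≤ δ := by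
    obtain ⟨z', hz'K, hz'd⟩ := Metric.mem_thickening_iff.mp hw
    obtain ⟨x0, -, rfl⟩ := hz'K
    have heq : imP w = imP (w - cV x0) := by
      refine PiLp.ext fun j => ?_
      simp [imP, cV, PiLp.sub_apply]
    rw [heq]
    refine (norm_imP_le _).trans ?_
    rw [← dist_eq_norm]
    exact hz'd.le
  have key : ∀ ξ : EuclideanSpace ℝ (Fin N),
      ENNReal.ofReal (Real.exp (-ε * ‖ξ‖ ^ 2)) *
        (∫⁻ τ : EuclideanSpace ℝ (Fin N),
          (‖Ψ ((‖ξ‖ ^ lam) • (cV τ - w))‖₊ : ℝ≥0∞) * ENNReal.ofReal (‖ξ‖ ^ (lam * N)))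
      ≤ (ENNReal.ofReal (cp * Real.exp Ey) * I₀)
          * ENNReal.ofReal (Real.exp (-(ε/2 * ‖ξ‖ ^ 2))) := by
    intro ξ
    by_cases hξ : ξ = 0
    · have hzero : ENNReal.ofReal (‖ξ‖ ^ (lam * (N:ℝ))) = 0 := by
        rw [hξ, norm_zero, Real.zero_rpow (mul_pos hlam0 hNR).ne', ENNReal.ofReal_zero]
      have h0 : (∫⁻ τ : EuclideanSpace ℝ (Fin N),
          (‖Ψ ((‖ξ‖ ^ lam) • (cV τ - w))‖₊ : ℝ≥0∞) * ENNReal.ofReal (‖ξ‖ ^ (lam * N))) = 0 := by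
        simp_rw [hzero, mul_zero, lintegral_zero]
      rw [h0, mul_zero]
      positivity
    · have hξn : 0 < ‖ξ‖ := norm_pos_iff.mpr hξ
      set t : ℝ := ‖ξ‖ ^ lam with htdef
      have ht : 0 < t := Real.rpow_pos_of_pos hξn lam
      have hta : t ^ (2 * k) = ‖ξ‖ ^ a := by
        rw [htdef, hadef, ← Real.rpow_natCast (‖ξ‖ ^ lam) (2 * k), ← Real.rpow_mul hξn.le]
      have htN : ENNReal.ofReal (‖ξ‖ ^ (lam * N)) = ENNReal.ofReal (t ^ N) := by
        rw [htdef, ← Real.rpow_natCast (‖ξ‖ ^ lam) N, ← Real.rpow_mul hξn.le]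
      have hpt : ∀ τ : EuclideanSpace ℝ (Fin N), (‖Ψ (t • (cV τ - w))‖₊ : ℝ≥0∞) ≤
          ENNReal.ofReal (cp * Real.exp (D * δ ^ (2*k) * ‖ξ‖ ^ a))
            * ENNReal.ofReal (Real.exp (-(c/2 * (t * ‖τ - reP w‖) ^ (2*k)))) := by
        intro τ
        rw [show (‖Ψ (t • (cV τ - w))‖₊ : ℝ≥0∞) = ENNReal.ofReal ‖Ψ (t • (cV τ - w))‖ from (ENNReal.ofReal_eq_coe_nnreal (norm_nonneg _)).symm, ← ENNReal.ofReal_mul (by positivity)]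
        apply ENNReal.ofReal_le_ofReal
        refine (hDb w τ t ht.le).trans ?_
        have h1 : D * (t * ‖imP w‖) ^ (2 * k) ≤ D * δ ^ (2*k) * ‖ξ‖ ^ a := by
          rw [← hta, mul_pow]
          calc D * (t ^ (2*k) * ‖imP w‖ ^ (2*k)) ≤ D * (t ^ (2*k) * δ ^ (2*k)) := by
                apply mul_le_mul_of_nonneg_left _ hD0
                exact mul_le_mul_of_nonneg_left
                  (pow_le_pow_left₀ (norm_nonneg _) hv _) (by positivity)
            _ = D * δ ^ (2*k) * t ^ (2*k) := by ring
        exact mul_le_mul_of_nonneg_right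
          (mul_le_mul_of_nonneg_left (Real.exp_le_exp.mpr h1) hcp.le) (Real.exp_nonneg _)
      have hinner : (∫⁻ τ : EuclideanSpace ℝ (Fin N),
            (‖Ψ (t • (cV τ - w))‖₊ : ℝ≥0∞) * ENNReal.ofReal (‖ξ‖ ^ (lam * N)))
          ≤ ENNReal.ofReal (cp * Real.exp (D * δ ^ (2*k) * ‖ξ‖ ^ a)) * I₀ := by
        rw [htN]
        calc (∫⁻ τ : EuclideanSpace ℝ (Fin N),
              (‖Ψ (t • (cV τ - w))‖₊ : ℝ≥0∞) * ENNReal.ofReal (t ^ N))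
            ≤ ∫⁻ τ : EuclideanSpace ℝ (Fin N),
                (ENNReal.ofReal (cp * Real.exp (D * δ ^ (2*k) * ‖ξ‖ ^ a))
                  * ENNReal.ofReal (Real.exp (-(c/2 * (t * ‖τ - reP w‖) ^ (2*k)))))
                  * ENNReal.ofReal (t ^ N) :=
              lintegral_mono (fun τ => mul_le_mul_left (hpt τ) _)
          _ = ENNReal.ofReal (cp * Real.exp (D * δ ^ (2*k) * ‖ξ‖ ^ a))
              * ∫⁻ τ : EuclideanSpace ℝ (Fin N),
                  ENNReal.ofReal (Real.exp (-(c/2 * (t * ‖τ - reP w‖) ^ (2*k))))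
                    * ENNReal.ofReal (t ^ N) := by
              rw [← lintegral_const_mul' _ _ ENNReal.ofReal_ne_top]
              congr 1
              funext τ
              ring
          _ = ENNReal.ofReal (cp * Real.exp (D * δ ^ (2*k) * ‖ξ‖ ^ a)) * I₀ := by
              rw [inner_calc t (c/2) ht (2*k) (reP w), hI₀def]
      calc ENNReal.ofReal (Real.exp (-ε * ‖ξ‖ ^ 2)) *
            (∫⁻ τ : EuclideanSpace ℝ (Fin N),
              (‖Ψ (t • (cV τ - w))‖₊ : ℝ≥0∞) * ENNReal.ofReal (‖ξ‖ ^ (lam * N)))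
          ≤ ENNReal.ofReal (Real.exp (-ε * ‖ξ‖ ^ 2)) *
              (ENNReal.ofReal (cp * Real.exp (D * δ ^ (2*k) * ‖ξ‖ ^ a)) * I₀) :=
            mul_le_mul_right hinner _
        _ = ENNReal.ofReal (Real.exp (-ε * ‖ξ‖ ^ 2)
              * (cp * Real.exp (D * δ ^ (2*k) * ‖ξ‖ ^ a))) * I₀ := by
            rw [← mul_assoc, ← ENNReal.ofReal_mul (Real.exp_nonneg _)]
        _ ≤ ENNReal.ofReal ((cp * Real.exp Ey) * Real.exp (-(ε/2 * ‖ξ‖ ^ 2))) * I₀ := by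
            apply mul_le_mul_left
            apply ENNReal.ofReal_le_ofReal
            have hB := hEyb ‖ξ‖ (norm_nonneg _)
            calc Real.exp (-ε * ‖ξ‖ ^ 2) * (cp * Real.exp (D * δ ^ (2*k) * ‖ξ‖ ^ a))
                = cp * Real.exp (-ε * ‖ξ‖ ^ 2 + D * δ ^ (2*k) * ‖ξ‖ ^ a) := by
                  rw [Real.exp_add]; ring
              _ ≤ cp * Real.exp (Ey + -(ε/2 * ‖ξ‖ ^ 2)) := by
                  apply mul_le_mul_of_nonneg_left _ hcp.le
                  apply Real.exp_le_exp.mpr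
                  linarith
              _ = (cp * Real.exp Ey) * Real.exp (-(ε/2 * ‖ξ‖ ^ 2)) := by
                  rw [Real.exp_add]; ring
        _ = (ENNReal.ofReal (cp * Real.exp Ey) * I₀)
              * ENNReal.ofReal (Real.exp (-(ε/2 * ‖ξ‖ ^ 2))) := by
            rw [ENNReal.ofReal_mul (by positivity)]
            ring
  calc (∫⁻ ξ : EuclideanSpace ℝ (Fin N),
          ENNReal.ofReal (Real.exp (-ε * ‖ξ‖ ^ 2)) *
            ∫⁻ τ : EuclideanSpace ℝ (Fin N),
              (‖Ψ ((‖ξ‖ ^ lam) • (cV τ - w))‖₊ : ℝ≥0∞) *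
                ENNReal.ofReal (‖ξ‖ ^ (lam * N)))
      ≤ ∫⁻ ξ : EuclideanSpace ℝ (Fin N),
          (ENNReal.ofReal (cp * Real.exp Ey) * I₀)
            * ENNReal.ofReal (Real.exp (-(ε/2 * ‖ξ‖ ^ 2))) := lintegral_mono key
    _ = T := by
        rw [lintegral_const_mul' _ _ hcon, hTdef, hGdef]
    _ < ENNReal.ofReal (T.toReal + 1) := by
        rw [ENNReal.lt_ofReal_iff_toReal_lt hTne]
        linarith


end
end

section
/- Let p, c_p be as above. Then for every w ∈ ℂ^N and every t > 0 the integral ∫_{ℝ^N} e^{−p(t(τ − w))} t^N dτ converges absolutely and c_p ∫_{ℝ^N} e^{−p(t(τ − w))} t^N dτ = 1. -/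
open MeasureTheory Metric Complex Filter

noncomputable section

namespace Stmt3Aux




lemma coord_le_norm {𝕜 : Type*} [RCLike 𝕜] {n : Type*} [Fintype n]
    (x : EuclideanSpace 𝕜 n) (j : n) : ‖x j‖ ≤ ‖x‖ := by
  rw [EuclideanSpace.norm_eq]
  have h1 : ‖x j‖ ^ 2 ≤ ∑ i, ‖x i‖ ^ 2 :=
    Finset.single_le_sum (f := fun i => ‖x i‖ ^ 2) (fun i _ => sq_nonneg _) (Finset.mem_univ j)
  calc ‖x j‖ = Real.sqrt (‖x j‖ ^ 2) := (Real.sqrt_sq (norm_nonneg _)).symm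
    _ ≤ _ := Real.sqrt_le_sqrt h1

lemma norm_le_card_mul {n : Type*} [Fintype n] (x : EuclideanSpace ℝ n) (m : ℝ)
    (hm : 0 ≤ m) (h : ∀ j, |x j| ≤ m) : ‖x‖ ≤ Real.sqrt (Fintype.card n) * m := by
  rw [EuclideanSpace.norm_eq]
  have h2 : ∑ i, ‖x i‖ ^ 2 ≤ (Fintype.card n : ℝ) * m ^ 2 := by
    calc ∑ i, ‖x i‖ ^ 2 ≤ ∑ _i : n, m ^ 2 := by
          refine Finset.sum_le_sum fun i _ => ?_
          have := h i
          rw [Real.norm_eq_abs]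
          nlinarith [abs_nonneg (x i)]
      _ = (Fintype.card n : ℝ) * m ^ 2 := by
          rw [Finset.sum_const, Finset.card_univ, nsmul_eq_mul]
  calc Real.sqrt (∑ i, ‖x i‖ ^ 2) ≤ Real.sqrt ((Fintype.card n : ℝ) * m ^ 2) :=
        Real.sqrt_le_sqrt h2
    _ = Real.sqrt (Fintype.card n) * m := by
        rw [Real.sqrt_mul (by positivity), Real.sqrt_sq hm]

lemma pow_sub_pow_le (a b : ℂ) (M : ℝ) (ha : ‖a‖ ≤ M) (hb : ‖b‖ ≤ M) :
    ∀ m : ℕ, ‖a ^ m - b ^ m‖ * M ≤ m * ‖a - b‖ * M ^ m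
  | 0 => by simp
  | (m + 1) => by
    have hM : 0 ≤ M := le_trans (norm_nonneg a) ha
    have ih := pow_sub_pow_le a b M ha hb m
    have key : a ^ (m + 1) - b ^ (m + 1) = (a - b) * a ^ m + b * (a ^ m - b ^ m) := by ring
    have h1 : ‖a ^ (m + 1) - b ^ (m + 1)‖ ≤ ‖a - b‖ * M ^ m + M * ‖a ^ m - b ^ m‖ := by
      rw [key]
      refine le_trans (norm_add_le _ _) ?_
      rw [norm_mul, norm_mul, norm_pow]
      gcongr
    calc ‖a ^ (m + 1) - b ^ (m + 1)‖ * M ≤ (‖a - b‖ * M ^ m + M * ‖a ^ m - b ^ m‖) * M := by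
          gcongr
      _ = ‖a - b‖ * M ^ (m + 1) + M * (‖a ^ m - b ^ m‖ * M) := by ring
      _ ≤ ‖a - b‖ * M ^ (m + 1) + M * (m * ‖a - b‖ * M ^ m) := by gcongr
      _ = (m + 1 : ℕ) * ‖a - b‖ * M ^ (m + 1) := by push_cast; ring

lemma norm_prod_pow_le {ι : Type*} (s : Finset ι) (A : ι → ℂ) (α : ι → ℕ) (M : ℝ)
    (hM : 0 ≤ M) (hA : ∀ j ∈ s, ‖A j‖ ≤ M) :
    ‖∏ j ∈ s, A j ^ α j‖ ≤ M ^ (∑ j ∈ s, α j) := by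
  calc ‖∏ j ∈ s, A j ^ α j‖ ≤ ∏ j ∈ s, ‖A j ^ α j‖ := le_of_eq (norm_prod s (fun j => A j ^ α j))
    _ ≤ ∏ j ∈ s, M ^ α j := by
        refine Finset.prod_le_prod (fun j _ => norm_nonneg _) fun j hj => ?_
        rw [norm_pow]
        exact pow_le_pow_left₀ (norm_nonneg _) (hA j hj) _
    _ = M ^ ∑ j ∈ s, α j := by rw [Finset.prod_pow_eq_pow_sum]

lemma prod_pow_sub_le {ι : Type*} [DecidableEq ι] (s : Finset ι) (A B : ι → ℂ)
    (α : ι → ℕ) (M : ℝ) (hM : 0 ≤ M) :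
    (∀ j ∈ s, ‖A j‖ ≤ M) → (∀ j ∈ s, ‖B j‖ ≤ M) →
    ‖∏ j ∈ s, A j ^ α j - ∏ j ∈ s, B j ^ α j‖ * M ≤
      (∑ j ∈ s, (α j : ℝ) * ‖A j - B j‖) * M ^ (∑ j ∈ s, α j) := by
  induction s using Finset.induction_on with
  | empty => intro _ _; simp
  | @insert i s hi ih =>
    intro hA hB
    have hA' : ∀ j ∈ s, ‖A j‖ ≤ M := fun j hj => hA j (Finset.mem_insert_of_mem hj)
    have hB' : ∀ j ∈ s, ‖B j‖ ≤ M := fun j hj => hB j (Finset.mem_insert_of_mem hj)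
    have hAi : ‖A i‖ ≤ M := hA i (Finset.mem_insert_self i s)
    have hBi : ‖B i‖ ≤ M := hB i (Finset.mem_insert_self i s)
    have ih' := ih hA' hB'
    rw [Finset.prod_insert hi, Finset.prod_insert hi, Finset.sum_insert hi,
      Finset.sum_insert hi]
    have key : A i ^ α i * ∏ j ∈ s, A j ^ α j - B i ^ α i * ∏ j ∈ s, B j ^ α j
        = (A i ^ α i - B i ^ α i) * ∏ j ∈ s, A j ^ α j
          + B i ^ α i * (∏ j ∈ s, A j ^ α j - ∏ j ∈ s, B j ^ α j) := by ring
    have h1 : ‖A i ^ α i * ∏ j ∈ s, A j ^ α j - B i ^ α i * ∏ j ∈ s, B j ^ α j‖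
        ≤ ‖A i ^ α i - B i ^ α i‖ * M ^ (∑ j ∈ s, α j)
          + M ^ α i * ‖∏ j ∈ s, A j ^ α j - ∏ j ∈ s, B j ^ α j‖ := by
      rw [key]
      refine le_trans (norm_add_le _ _) ?_
      gcongr
      · rw [norm_mul]
        gcongr
        exact norm_prod_pow_le s A α M hM hA'
      · rw [norm_mul]
        gcongr
        rw [norm_pow]
        exact pow_le_pow_left₀ (norm_nonneg _) hBi _
    calc ‖A i ^ α i * ∏ j ∈ s, A j ^ α j - B i ^ α i * ∏ j ∈ s, B j ^ α j‖ * M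
        ≤ (‖A i ^ α i - B i ^ α i‖ * M ^ (∑ j ∈ s, α j)
            + M ^ α i * ‖∏ j ∈ s, A j ^ α j - ∏ j ∈ s, B j ^ α j‖) * M := by gcongr
      _ = (‖A i ^ α i - B i ^ α i‖ * M) * M ^ (∑ j ∈ s, α j)
            + M ^ α i * (‖∏ j ∈ s, A j ^ α j - ∏ j ∈ s, B j ^ α j‖ * M) := by ring
      _ ≤ ((α i : ℝ) * ‖A i - B i‖ * M ^ α i) * M ^ (∑ j ∈ s, α j)
            + M ^ α i * ((∑ j ∈ s, (α j : ℝ) * ‖A j - B j‖) * M ^ (∑ j ∈ s, α j)) :=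
          add_le_add
            (mul_le_mul_of_nonneg_right (pow_sub_pow_le (A i) (B i) M hAi hBi (α i))
              (pow_nonneg hM _))
            (mul_le_mul_of_nonneg_left ih' (pow_nonneg hM _))
      _ = ((α i : ℝ) * ‖A i - B i‖ + ∑ j ∈ s, (α j : ℝ) * ‖A j - B j‖)
            * M ^ (α i + ∑ j ∈ s, α j) := by rw [pow_add]; ring



lemma add_pow_le₂ (u v : ℝ) (hu : 0 ≤ u) (hv : 0 ≤ v) (n : ℕ) :
    (u + v) ^ n ≤ 2 ^ n * (u ^ n + v ^ n) := by
  rcases le_total u v with h | h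
  · calc (u + v) ^ n ≤ (2 * v) ^ n := by gcongr; linarith
      _ = 2 ^ n * v ^ n := by rw [mul_pow]
      _ ≤ 2 ^ n * (u ^ n + v ^ n) := by
          have := pow_nonneg hu n; nlinarith [pow_pos (show (0:ℝ) < 2 by norm_num) n]
  · calc (u + v) ^ n ≤ (2 * u) ^ n := by gcongr; linarith
      _ = 2 ^ n * u ^ n := by rw [mul_pow]
      _ ≤ 2 ^ n * (u ^ n + v ^ n) := by
          have := pow_nonneg hv n; nlinarith [pow_pos (show (0:ℝ) < 2 by norm_num) n]

lemma absorb (n : ℕ) (hn : 1 ≤ n) (c D : ℝ) (hc : 0 < c) (hD : 0 ≤ D) :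
    ∃ E : ℝ, 0 ≤ E ∧ ∀ r : ℝ, 0 ≤ r → D * r ^ (n - 1) ≤ c * r ^ n + E := by
  refine ⟨D * (D / c + 1) ^ (n - 1), by positivity, fun r hr => ?_⟩
  rcases le_total r (D / c + 1) with h | h
  · have h1 : D * r ^ (n - 1) ≤ D * (D / c + 1) ^ (n - 1) := by gcongr
    nlinarith [mul_nonneg hc.le (pow_nonneg hr n)]
  · have h0 : (0:ℝ) ≤ D / c := by positivity
    have h2 : D ≤ c * r := by
      have h3 : c * (D / c + 1) ≤ c * r := by gcongr
      rw [mul_add, mul_one, mul_div_cancel₀ _ hc.ne'] at h3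
      linarith
    have h3 : r ^ n = r * r ^ (n - 1) := by
      conv_lhs => rw [show n = 1 + (n - 1) by omega]
      rw [pow_add, pow_one]
    have h4 : D * r ^ (n - 1) ≤ (c * r) * r ^ (n - 1) := by
      exact mul_le_mul_of_nonneg_right h2 (pow_nonneg hr _)
    have h5 : (0:ℝ) ≤ D * (D / c + 1) ^ (n - 1) := by positivity
    calc D * r ^ (n - 1) ≤ (c * r) * r ^ (n - 1) := h4
      _ = c * r ^ n := by rw [h3]; ring
      _ ≤ _ := by linarith

lemma pow_lower (n : ℕ) (t G : ℝ) (ht : 0 < t) (hG : 0 ≤ G) :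
    ∃ E : ℝ, 0 ≤ E ∧ ∀ ρ x : ℝ, 0 ≤ ρ → 0 ≤ x → t * ρ - G ≤ x →
      (t / 2) ^ n * ρ ^ n ≤ x ^ n + E := by
  refine ⟨(t / 2) ^ n * (2 * G / t) ^ n, by positivity, fun ρ x hρ hx hle => ?_⟩
  rcases le_total ρ (2 * G / t) with h | h
  · have h1 : (t / 2) ^ n * ρ ^ n ≤ (t / 2) ^ n * (2 * G / t) ^ n := by gcongr
    nlinarith [pow_nonneg hx n]
  · have h2 : G ≤ t / 2 * ρ := by
      have h3 : t * (2 * G / t) ≤ t * ρ := by gcongr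
      have h4 : t * (2 * G / t) = 2 * G := by field_simp
      rw [h4] at h3
      linarith
    have h4 : t / 2 * ρ ≤ x := by linarith
    have h5 : ((t / 2) * ρ) ^ n ≤ x ^ n := pow_le_pow_left₀ (by positivity) h4 n
    have h6 : (0:ℝ) ≤ (t / 2) ^ n * (2 * G / t) ^ n := by positivity
    calc (t / 2) ^ n * ρ ^ n = ((t / 2) * ρ) ^ n := (mul_pow _ _ _).symm
      _ ≤ x ^ n := h5
      _ ≤ _ := by linarith




lemma add_pow_le₂' (u v : ℝ) (hu : 0 ≤ u) (hv : 0 ≤ v) (n : ℕ) :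
    (u + v) ^ n ≤ 2 ^ n * (u ^ n + v ^ n) := by
  rcases le_total u v with h | h
  · calc (u + v) ^ n ≤ (2 * v) ^ n := by gcongr; linarith
      _ = 2 ^ n * v ^ n := by rw [mul_pow]
      _ ≤ 2 ^ n * (u ^ n + v ^ n) := by
          have := pow_nonneg hu n; nlinarith [pow_pos (show (0:ℝ) < 2 by norm_num) n]
  · calc (u + v) ^ n ≤ (2 * u) ^ n := by gcongr; linarith
      _ = 2 ^ n * u ^ n := by rw [mul_pow]
      _ ≤ 2 ^ n * (u ^ n + v ^ n) := by
          have := pow_nonneg hv n; nlinarith [pow_pos (show (0:ℝ) < 2 by norm_num) n]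

lemma integrable_gauss (N : ℕ) (b : ℝ) (hb : 0 < b) :
    Integrable (fun τ : EuclideanSpace ℝ (Fin N) => Real.exp (-(b * ‖τ‖ ^ 2))) := by
  have h := (GaussianFourier.integrable_cexp_neg_mul_sq_norm_add
    (V := EuclideanSpace ℝ (Fin N)) (b := (b : ℂ)) (by simpa using hb) 0 0).norm
  refine h.congr (Filter.Eventually.of_forall fun τ => ?_)
  show ‖cexp _‖ = _
  rw [show -(b:ℂ) * ((‖τ‖:ℝ):ℂ) ^ 2 + 0 * ((inner ℝ (0 : EuclideanSpace ℝ (Fin N)) τ : ℝ) : ℂ)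
      = ((-(b * ‖τ‖ ^ 2) : ℝ) : ℂ) from by push_cast; ring]
  rw [Complex.norm_exp_ofReal]

lemma pow_le_exp_aux (d : ℕ) (x : ℝ) (hx : 0 ≤ x) :
    x ^ d ≤ (d.factorial : ℝ) * Real.exp x := by
  have h1 : x ^ d / (d.factorial : ℝ) ≤ Real.exp x := by
    refine le_trans ?_ (Real.sum_le_exp_of_nonneg hx (d + 1))
    exact Finset.single_le_sum (f := fun i => x ^ i / (i.factorial : ℝ))
      (fun i _ => by positivity) (Finset.self_mem_range_succ d)
  have hd : (0:ℝ) < (d.factorial : ℝ) := by exact_mod_cast d.factorial_pos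
  rw [div_le_iff₀ hd] at h1
  linarith

lemma one_add_pow_le_exp (k d : ℕ) (hk : 1 ≤ k) (b : ℝ) (hb : 0 < b) :
    ∃ Kb : ℝ, 0 < Kb ∧ ∀ r : ℝ, 0 ≤ r →
      (1 + r) ^ d ≤ Kb * Real.exp (b / 2 * r ^ (2 * k)) := by
  refine ⟨2 ^ d * (2 + (2 / b) ^ d * (d.factorial : ℝ)), by positivity, fun r hr => ?_⟩
  set y : ℝ := r ^ (2 * k) with hy
  have hy0 : 0 ≤ y := by positivity
  have hexp1 : (1:ℝ) ≤ Real.exp (b / 2 * y) := Real.one_le_exp (by positivity)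
  have h1 : (1 + r) ^ d ≤ 2 ^ d * (1 + r ^ d) := by
    have := add_pow_le₂' 1 r (by norm_num) hr d
    simpa using this
  have h2 : r ^ d ≤ 1 + y ^ d := by
    rcases le_total r 1 with h | h
    · have : r ^ d ≤ 1 := pow_le_one₀ hr h
      nlinarith [pow_nonneg hy0 d]
    · have h3 : r ^ d ≤ r ^ (2 * k * d) := pow_le_pow_right₀ h (Nat.le_mul_of_pos_left d (by omega))
      have h4 : r ^ (2 * k * d) = y ^ d := by rw [hy, ← pow_mul]
      nlinarith
  have h5 : y ^ d ≤ (2 / b) ^ d * ((d.factorial : ℝ) * Real.exp (b / 2 * y)) := by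
    have h6 : y ^ d = (2 / b) ^ d * (b / 2 * y) ^ d := by
      rw [← mul_pow]
      congr 1
      field_simp
    rw [h6]
    have h7 := pow_le_exp_aux d (b / 2 * y) (by positivity)
    have h8 : (0:ℝ) ≤ (2 / b) ^ d := by positivity
    nlinarith
  have h9 : (0:ℝ) ≤ (2/b) ^ d * (d.factorial : ℝ) := by positivity
  have h10 : (0:ℝ) < (2:ℝ) ^ d := by positivity
  nlinarith

lemma sq_le_pow2k (k : ℕ) (hk : 1 ≤ k) (r : ℝ) (hr : 0 ≤ r) :
    r ^ 2 - 1 ≤ r ^ (2 * k) := by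
  rcases le_total r 1 with h | h
  · have h1 : r ^ 2 ≤ 1 := pow_le_one₀ hr h
    nlinarith [pow_nonneg hr (2 * k)]
  · have : r ^ 2 ≤ r ^ (2 * k) := pow_le_pow_right₀ h (by omega)
    linarith

lemma integrable_canonical (N k d : ℕ) (hk : 1 ≤ k) (b : ℝ) (hb : 0 < b) :
    Integrable (fun τ : EuclideanSpace ℝ (Fin N) =>
      Real.exp (-(b * ‖τ‖ ^ (2 * k))) * (1 + ‖τ‖) ^ d) := by
  obtain ⟨Kb, hKb, hKbd⟩ := one_add_pow_le_exp k d hk b hb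
  have hmeas : AEStronglyMeasurable (fun τ : EuclideanSpace ℝ (Fin N) =>
      Real.exp (-(b * ‖τ‖ ^ (2 * k))) * (1 + ‖τ‖) ^ d) volume := by
    refine Continuous.aestronglyMeasurable ?_
    exact (Real.continuous_exp.comp (continuous_const.mul (continuous_norm.pow (2 * k))).neg).mul
      ((continuous_const.add continuous_norm).pow d)
  have hint : Integrable (fun τ : EuclideanSpace ℝ (Fin N) =>
      (Kb * Real.exp (b / 2)) * Real.exp (-(b / 2 * ‖τ‖ ^ 2))) :=
    (integrable_gauss N (b / 2) (by positivity)).const_mul _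
  refine hint.mono hmeas (Filter.Eventually.of_forall fun τ => ?_)
  set r : ℝ := ‖τ‖ with hrdef
  have hr : 0 ≤ r := norm_nonneg _
  have key1 := hKbd r hr
  have key2 : Real.exp (-(b * r ^ (2 * k))) * Real.exp (b / 2 * r ^ (2 * k))
      = Real.exp (-(b / 2 * r ^ (2 * k))) := by
    rw [← Real.exp_add]; ring_nf
  have key3 : Real.exp (-(b / 2 * r ^ (2 * k))) ≤ Real.exp (b / 2) * Real.exp (-(b / 2 * r ^ 2)) := by
    rw [← Real.exp_add]
    apply Real.exp_le_exp.2
    have := sq_le_pow2k k hk r hr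
    nlinarith
  have hnn : 0 ≤ Real.exp (-(b * r ^ (2 * k))) * (1 + r) ^ d := by positivity
  rw [Real.norm_eq_abs, _root_.abs_of_nonneg hnn, Real.norm_eq_abs, _root_.abs_of_nonneg (by positivity : (0:ℝ) ≤ Kb * Real.exp (b / 2) * Real.exp (-(b / 2 * r ^ 2)))]
  calc Real.exp (-(b * r ^ (2 * k))) * (1 + r) ^ d
      ≤ Real.exp (-(b * r ^ (2 * k))) * (Kb * Real.exp (b / 2 * r ^ (2 * k))) := by
        gcongr
    _ = Kb * (Real.exp (-(b * r ^ (2 * k))) * Real.exp (b / 2 * r ^ (2 * k))) := by ring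
    _ = Kb * Real.exp (-(b / 2 * r ^ (2 * k))) := by rw [key2]
    _ ≤ Kb * (Real.exp (b / 2) * Real.exp (-(b / 2 * r ^ 2))) := by gcongr
    _ = Kb * Real.exp (b / 2) * Real.exp (-(b / 2 * r ^ 2)) := by ring

section Poly

variable {N k : ℕ} {p : EuclideanSpace ℂ (Fin N) → ℂ}
  {a : (Fin N → ℕ) → ℝ} {S : Finset (Fin N → ℕ)} {c : ℝ}

lemma continuous_cV : Continuous (cV (N := N)) :=
  (PiLp.continuous_toLp 2 _).comp (continuous_pi fun j => Complex.continuous_ofReal.comp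
    ((continuous_apply j).comp (PiLp.continuous_ofLp 2 _)))

lemma continuous_of_form
    (hform : ∀ z : EuclideanSpace ℂ (Fin N), p z = ∑ α ∈ S, (a α : ℂ) * ∏ j, z j ^ α j) :
    Continuous p := by
  have h : p = fun z => ∑ α ∈ S, (a α : ℂ) * ∏ j, z j ^ α j := funext hform
  rw [h]
  exact continuous_finset_sum _ fun α _ =>
    continuous_const.mul (continuous_finset_prod _ fun j _ => ((continuous_apply j).comp (PiLp.continuous_ofLp 2 _)).pow _)

lemma integrand_continuous
    (hform : ∀ z : EuclideanSpace ℂ (Fin N), p z = ∑ α ∈ S, (a α : ℂ) * ∏ j, z j ^ α j)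
    (t : ℝ) (w' : EuclideanSpace ℂ (Fin N)) :
    Continuous (fun τ : EuclideanSpace ℝ (Fin N) => Complex.exp (-(p (t • (cV τ - w'))))) :=
  Complex.continuous_exp.comp
    (((continuous_of_form hform).comp
      ((continuous_cV.sub continuous_const).const_smul t)).neg)

lemma re_lower (hk : 1 ≤ k) (hc : 0 < c)
    (hS : ∀ α ∈ S, ∑ j, α j = 2 * k)
    (hform : ∀ z : EuclideanSpace ℂ (Fin N), p z = ∑ α ∈ S, (a α : ℂ) * ∏ j, z j ^ α j)
    (hlow : ∀ x : EuclideanSpace ℝ (Fin N), c * ‖x‖ ^ (2 * k) ≤ (p (cV x)).re)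
    (B : ℝ) (hB : 0 ≤ B) :
    ∃ E : ℝ, 0 ≤ E ∧ ∀ (x y : EuclideanSpace ℝ (Fin N)), (∀ j, |y j| ≤ B) →
      c / 2 * ‖x‖ ^ (2 * k) - E ≤
        (p (WithLp.toLp 2 (fun j => ((x j : ℝ) : ℂ) + (y j : ℂ) * Complex.I))).re := by
  classical
  set A : ℝ := ∑ α ∈ S, |a α| with hA
  have hA0 : 0 ≤ A := Finset.sum_nonneg fun α _ => abs_nonneg _
  set D : ℝ := A * ((2 * k : ℝ) * B) * 2 ^ (2 * k - 1) with hD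
  have hD0 : 0 ≤ D := by positivity
  obtain ⟨E₁, hE₁0, hE₁⟩ := absorb (2 * k) (by omega) (c / 2) D (by positivity) hD0
  refine ⟨E₁ + D * (B + 1) ^ (2 * k - 1), by positivity, fun x y hy => ?_⟩
  set z : EuclideanSpace ℂ (Fin N) :=
    WithLp.toLp 2 (fun j => ((x j : ℝ) : ℂ) + (y j : ℂ) * Complex.I) with hz
  set M : ℝ := ‖x‖ + (B + 1) with hM
  have hxn : 0 ≤ ‖x‖ := norm_nonneg x
  have hM1 : 1 ≤ M := by rw [hM]; linarith
  have hM0 : 0 < M := lt_of_lt_of_le one_pos hM1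
  have hxabs : ∀ j, |x j| ≤ ‖x‖ := by
    intro j
    have := coord_le_norm (𝕜 := ℝ) x j
    simpa [Real.norm_eq_abs] using this
  have hxc : ∀ j, ‖cV x j‖ ≤ M := by
    intro j
    show ‖((x j : ℝ) : ℂ)‖ ≤ M
    rw [Complex.norm_real, Real.norm_eq_abs]
    have := hxabs j
    rw [hM]; linarith
  have hzc : ∀ j, ‖z j‖ ≤ M := by
    intro j
    have h1 : ‖z j‖ ≤ ‖((x j : ℝ) : ℂ)‖ + ‖(y j : ℂ) * Complex.I‖ := norm_add_le _ _
    have h2 : ‖(y j : ℂ) * Complex.I‖ = |y j| := by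
      rw [norm_mul, Complex.norm_real, Complex.norm_I, mul_one, Real.norm_eq_abs]
    have h3 : ‖((x j : ℝ) : ℂ)‖ = |x j| := by rw [Complex.norm_real, Real.norm_eq_abs]
    have h4 := hy j
    have h5 := hxabs j
    rw [h2, h3] at h1
    rw [hM]; linarith
  have hdiffc : ∀ j, ‖z j - cV x j‖ = |y j| := by
    intro j
    show ‖(((x j : ℝ) : ℂ) + (y j : ℂ) * Complex.I) - ((x j : ℝ) : ℂ)‖ = |y j|
    rw [add_sub_cancel_left, norm_mul, Complex.norm_real, Complex.norm_I, mul_one,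
      Real.norm_eq_abs]
  have hΔ : ∀ α ∈ S, ‖(∏ j, z j ^ α j) - ∏ j, cV x j ^ α j‖
      ≤ (2 * k : ℝ) * B * M ^ (2 * k - 1) := by
    intro α hα
    have h0 := prod_pow_sub_le Finset.univ (fun j => z j) (fun j => cV x j) α M hM0.le
      (fun j _ => hzc j) (fun j _ => hxc j)
    have hsum : ∑ j, (α j : ℝ) * ‖z j - cV x j‖ ≤ (2 * k : ℝ) * B := by
      calc ∑ j, (α j : ℝ) * ‖z j - cV x j‖ ≤ ∑ j, (α j : ℝ) * B := by
            refine Finset.sum_le_sum fun j _ => ?_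
            rw [hdiffc j]
            exact mul_le_mul_of_nonneg_left (hy j) (by positivity)
        _ = ((∑ j, α j : ℕ) : ℝ) * B := by rw [← Finset.sum_mul, Nat.cast_sum]
        _ = (2 * k : ℝ) * B := by rw [hS α hα]; push_cast; ring
    rw [hS α hα] at h0
    have hpow : M ^ (2 * k) = M ^ (2 * k - 1) * M := by
      rw [← pow_succ]; congr 1; omega
    have h2 : ‖(∏ j, z j ^ α j) - ∏ j, cV x j ^ α j‖ * M
        ≤ ((2 * k : ℝ) * B * M ^ (2 * k - 1)) * M := by
      refine h0.trans ?_
      rw [hpow]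
      calc (∑ j, (α j : ℝ) * ‖z j - cV x j‖) * (M ^ (2 * k - 1) * M)
          ≤ ((2 * k : ℝ) * B) * (M ^ (2 * k - 1) * M) := by
            exact mul_le_mul_of_nonneg_right hsum (by positivity)
        _ = ((2 * k : ℝ) * B * M ^ (2 * k - 1)) * M := by ring
    exact le_of_mul_le_mul_right h2 hM0
  have h3 : ‖p z - p (cV x)‖ ≤ A * ((2 * k : ℝ) * B * M ^ (2 * k - 1)) := by
    rw [hform z, hform (cV x), ← Finset.sum_sub_distrib]
    refine (norm_sum_le _ _).trans ?_
    calc ∑ α ∈ S, ‖(a α : ℂ) * ∏ j, z j ^ α j - (a α : ℂ) * ∏ j, cV x j ^ α j‖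
        = ∑ α ∈ S, |a α| * ‖(∏ j, z j ^ α j) - ∏ j, cV x j ^ α j‖ := by
          refine Finset.sum_congr rfl fun α _ => ?_
          rw [← mul_sub, norm_mul, Complex.norm_real, Real.norm_eq_abs]
      _ ≤ ∑ α ∈ S, |a α| * ((2 * k : ℝ) * B * M ^ (2 * k - 1)) := by
          refine Finset.sum_le_sum fun α hα => ?_
          exact mul_le_mul_of_nonneg_left (hΔ α hα) (abs_nonneg _)
      _ = A * ((2 * k : ℝ) * B * M ^ (2 * k - 1)) := by rw [hA, ← Finset.sum_mul]
  have h6 : A * ((2 * k : ℝ) * B) * M ^ (2 * k - 1)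
      ≤ D * (‖x‖ ^ (2 * k - 1) + (B + 1) ^ (2 * k - 1)) := by
    have h7 := add_pow_le₂' ‖x‖ (B + 1) hxn (by positivity) (2 * k - 1)
    calc A * ((2 * k : ℝ) * B) * M ^ (2 * k - 1)
        ≤ A * ((2 * k : ℝ) * B) * (2 ^ (2 * k - 1)
            * (‖x‖ ^ (2 * k - 1) + (B + 1) ^ (2 * k - 1))) := by
          refine mul_le_mul_of_nonneg_left ?_ (by positivity)
          rw [hM]; exact h7
      _ = D * (‖x‖ ^ (2 * k - 1) + (B + 1) ^ (2 * k - 1)) := by rw [hD]; ring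
  have h8 : |(p z - p (cV x)).re| ≤ ‖p z - p (cV x)‖ := by
    exact Complex.abs_re_le_norm _
  have h9 : (p z - p (cV x)).re = (p z).re - (p (cV x)).re := Complex.sub_re _ _
  have h10 := hlow x
  have h11 := hE₁ ‖x‖ hxn
  have h12 := abs_le.1 h8
  have hDx : D * ‖x‖ ^ (2 * k - 1) ≤ c / 2 * ‖x‖ ^ (2 * k) + E₁ := h11
  have hchain : A * ((2 * k : ℝ) * B * M ^ (2 * k - 1))
      = A * ((2 * k : ℝ) * B) * M ^ (2 * k - 1) := by ring
  rw [hchain] at h3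
  nlinarith [h3, h6, h10, h12.1, h9]

lemma exp_bound (hk : 1 ≤ k) (hc : 0 < c)
    (hS : ∀ α ∈ S, ∑ j, α j = 2 * k)
    (hform : ∀ z : EuclideanSpace ℂ (Fin N), p z = ∑ α ∈ S, (a α : ℂ) * ∏ j, z j ^ α j)
    (hlow : ∀ x : EuclideanSpace ℝ (Fin N), c * ‖x‖ ^ (2 * k) ≤ (p (cV x)).re)
    (t : ℝ) (ht : 0 < t) (Bc : ℝ) (hBc : 0 ≤ Bc) :
    ∃ K c₄ : ℝ, 0 ≤ K ∧ 0 < c₄ ∧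
      ∀ (w' : EuclideanSpace ℂ (Fin N)) (τ : EuclideanSpace ℝ (Fin N)),
      (∀ l, ‖w' l‖ ≤ Bc) →
      Real.exp (-(p (t • (cV τ - w'))).re) ≤ K * Real.exp (-(c₄ * ‖τ‖ ^ (2 * k))) := by
  classical
  obtain ⟨E, hE0, hE⟩ := re_lower hk hc hS hform hlow (t * Bc) (by positivity)
  obtain ⟨E', hE'0, hE'⟩ := pow_lower (2 * k) t (t * (Real.sqrt N * Bc)) ht (by positivity)
  refine ⟨Real.exp (c / 2 * E' + E), c / 2 * (t / 2) ^ (2 * k), (Real.exp_pos _).le,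
    by positivity, fun w' τ hw' => ?_⟩
  set x : EuclideanSpace ℝ (Fin N) := WithLp.toLp 2 (fun l => t * (τ l - (w' l).re)) with hx
  set y : EuclideanSpace ℝ (Fin N) := WithLp.toLp 2 (fun l => -(t * (w' l).im)) with hyy
  have hzeq : t • (cV τ - w') = WithLp.toLp 2 (fun j => ((x j : ℝ) : ℂ) + (y j : ℂ) * Complex.I) := by
    ext l
    rw [PiLp.smul_apply, PiLp.sub_apply]
    show t • ((τ l : ℂ) - w' l) = ((x l : ℝ) : ℂ) + (y l : ℂ) * Complex.I
    have hxl : x l = t * (τ l - (w' l).re) := rfl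
    have hyl : y l = -(t * (w' l).im) := rfl
    rw [Complex.real_smul, hxl, hyl]
    apply Complex.ext
    · simp [Complex.sub_re]
    · simp [Complex.sub_im]
  have hyb : ∀ l, |y l| ≤ t * Bc := by
    intro l
    have h1 : |(w' l).im| ≤ ‖w' l‖ := by
      exact Complex.abs_im_le_norm _
    have h2 := hw' l
    have hyl : y l = -(t * (w' l).im) := rfl
    rw [hyl, abs_neg, abs_mul, abs_of_pos ht]
    exact mul_le_mul_of_nonneg_left (h1.trans h2) ht.le
  have hre := hE x y hyb
  -- lower bound for ‖x‖
  set v : EuclideanSpace ℝ (Fin N) := WithLp.toLp 2 (fun l => (w' l).re) with hv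
  have hxeq : x = t • (τ - v) := by
    ext l
    rw [PiLp.smul_apply, PiLp.sub_apply]
    rfl
  have hvb : ‖v‖ ≤ Real.sqrt N * Bc := by
    have h1 : ∀ l, |v l| ≤ Bc := by
      intro l
      have h2 : |(w' l).re| ≤ ‖w' l‖ := by
        exact Complex.abs_re_le_norm _
      exact h2.trans (hw' l)
    have := norm_le_card_mul v Bc hBc h1
    simpa [Fintype.card_fin] using this
  have hxlow : t * ‖τ‖ - t * (Real.sqrt N * Bc) ≤ ‖x‖ := by
    have h1 : ‖x‖ = t * ‖τ - v‖ := by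
      rw [hxeq, norm_smul, Real.norm_eq_abs, abs_of_pos ht]
    have h2 : ‖τ‖ - ‖v‖ ≤ ‖τ - v‖ := by
      have := norm_sub_norm_le τ v
      exact le_trans (by linarith [le_abs_self (‖τ‖ - ‖v‖)]) this
    have h3 : t * (‖τ‖ - ‖v‖) ≤ t * ‖τ - v‖ := mul_le_mul_of_nonneg_left h2 ht.le
    have h4 : t * (Real.sqrt N * Bc) ≥ t * ‖v‖ := mul_le_mul_of_nonneg_left hvb ht.le
    rw [h1]
    nlinarith
  have hpow := hE' ‖τ‖ ‖x‖ (norm_nonneg _) (norm_nonneg _) hxlow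
  have hfinal : c / 2 * (t / 2) ^ (2 * k) * ‖τ‖ ^ (2 * k) - (c / 2 * E' + E)
      ≤ (p (t • (cV τ - w'))).re := by
    rw [hzeq]
    have h5 : c / 2 * ((t / 2) ^ (2 * k) * ‖τ‖ ^ (2 * k))
        ≤ c / 2 * (‖x‖ ^ (2 * k) + E') := by
      refine mul_le_mul_of_nonneg_left ?_ (by positivity)
      exact hpow
    nlinarith [hre]
  rw [← Real.exp_add]
  refine Real.exp_le_exp.2 ?_
  linarith

lemma main_integrable (hk : 1 ≤ k) (hc : 0 < c)
    (hS : ∀ α ∈ S, ∑ j, α j = 2 * k)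
    (hform : ∀ z : EuclideanSpace ℂ (Fin N), p z = ∑ α ∈ S, (a α : ℂ) * ∏ j, z j ^ α j)
    (hlow : ∀ x : EuclideanSpace ℝ (Fin N), c * ‖x‖ ^ (2 * k) ≤ (p (cV x)).re)
    (t : ℝ) (ht : 0 < t) (w' : EuclideanSpace ℂ (Fin N)) :
    Integrable (fun τ : EuclideanSpace ℝ (Fin N) =>
      Complex.exp (-(p (t • (cV τ - w'))))) := by
  obtain ⟨K, c₄, hK, hc₄, hbd⟩ := exp_bound hk hc hS hform hlow t ht ‖w'‖ (norm_nonneg _)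
  have hint : Integrable (fun τ : EuclideanSpace ℝ (Fin N) =>
      K * (Real.exp (-(c₄ * ‖τ‖ ^ (2 * k))) * (1 + ‖τ‖) ^ 0)) :=
    (integrable_canonical N k 0 hk c₄ hc₄).const_mul K
  refine hint.mono (integrand_continuous hform t w').aestronglyMeasurable
    (Filter.Eventually.of_forall fun τ => ?_)
  have h1 : ‖Complex.exp (-(p (t • (cV τ - w'))))‖
      = Real.exp (-(p (t • (cV τ - w'))).re) := by
    rw [Complex.norm_exp, Complex.neg_re]
  rw [h1]
  have h2 := hbd w' τ (fun l => coord_le_norm w' l)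
  have h3 : K * (Real.exp (-(c₄ * ‖τ‖ ^ (2 * k))) * (1 + ‖τ‖) ^ 0)
      = K * Real.exp (-(c₄ * ‖τ‖ ^ (2 * k))) := by rw [pow_zero, mul_one]
  rw [Real.norm_eq_abs, h3, _root_.abs_of_nonneg (by positivity : (0:ℝ) ≤ K * Real.exp (-(c₄ * ‖τ‖ ^ (2 * k))))]
  exact h2

end Poly

section Const

variable {N k : ℕ} {p : EuclideanSpace ℂ (Fin N) → ℂ}
  {a : (Fin N → ℕ) → ℝ} {S : Finset (Fin N → ℕ)} {c : ℝ}

/-- Coordinate update inside `EuclideanSpace ℂ (Fin N)`. -/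
def upd (w : EuclideanSpace ℂ (Fin N)) (j : Fin N) (s : ℂ) : EuclideanSpace ℂ (Fin N) :=
  WithLp.toLp 2 (Function.update w.ofLp j s)

lemma upd_same (w : EuclideanSpace ℂ (Fin N)) (j : Fin N) (s : ℂ) : upd w j s j = s := by
  unfold upd
  exact Function.update_self j s w.ofLp

lemma upd_noteq {l j : Fin N} (hl : l ≠ j) (w : EuclideanSpace ℂ (Fin N)) (s : ℂ) :
    upd w j s l = w l := by
  unfold upd
  exact Function.update_of_ne hl s w.ofLp

lemma upd_self (w : EuclideanSpace ℂ (Fin N)) (j : Fin N) : upd w j (w j) = w :=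
  by unfold upd; exact congrArg (WithLp.toLp 2) (Function.update_eq_self j w.ofLp)

lemma trans_inv (t : ℝ) (w : EuclideanSpace ℂ (Fin N)) (v : EuclideanSpace ℝ (Fin N)) :
    (∫ τ : EuclideanSpace ℝ (Fin N), Complex.exp (-(p (t • (cV τ - (w + cV v))))))
      = ∫ τ : EuclideanSpace ℝ (Fin N), Complex.exp (-(p (t • (cV τ - w)))) := by
  conv_rhs => rw [← integral_sub_right_eq_self
    (fun τ : EuclideanSpace ℝ (Fin N) => Complex.exp (-(p (t • (cV τ - w))))) v]
  refine integral_congr_ae (Filter.Eventually.of_forall fun τ => ?_)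
  show Complex.exp (-(p (t • (cV τ - (w + cV v))))) = Complex.exp (-(p (t • (cV (τ - v) - w))))
  have h1 : cV τ - (w + cV v) = cV (τ - v) - w := by
    ext l
    rw [PiLp.sub_apply, PiLp.add_apply, PiLp.sub_apply]
    show (τ l : ℂ) - (w l + (v l : ℂ)) = ((τ - v) l : ℂ) - w l
    rw [PiLp.sub_apply]
    push_cast
    ring
  rw [h1]

lemma hasDeriv_h (hk : 1 ≤ k) (hc : 0 < c)
    (hS : ∀ α ∈ S, ∑ j, α j = 2 * k)
    (hform : ∀ z : EuclideanSpace ℂ (Fin N), p z = ∑ α ∈ S, (a α : ℂ) * ∏ j, z j ^ α j)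
    (hlow : ∀ x : EuclideanSpace ℝ (Fin N), c * ‖x‖ ^ (2 * k) ≤ (p (cV x)).re)
    (t : ℝ) (ht : 0 < t) (w : EuclideanSpace ℂ (Fin N)) (j : Fin N) (s₀ : ℂ) :
    ∃ d, HasDerivAt (fun s : ℂ => ∫ τ : EuclideanSpace ℝ (Fin N),
      Complex.exp (-(p (t • (cV τ - upd w j s))))) d s₀ := by
  classical
  set m : Fin N → ℂ → EuclideanSpace ℝ (Fin N) → ℂ :=
    (fun l s τ => (t : ℂ) * ((τ l : ℂ) - upd w j s l)) with hm_def
  set dd : Fin N → ℂ := (fun l => if l = j then -(t : ℂ) else 0) with hdd_def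
  set ψ : ℂ → EuclideanSpace ℝ (Fin N) → ℂ := (fun s τ => ∑ α ∈ S, (a α : ℂ) *
    ∑ i, (∏ l ∈ Finset.univ.erase i, (m l s τ) ^ (α l)) •
      ((α i : ℂ) * (m i s τ) ^ (α i - 1) * dd i)) with hψ_def
  set F : ℂ → EuclideanSpace ℝ (Fin N) → ℂ :=
    (fun s τ => Complex.exp (-(p (t • (cV τ - upd w j s))))) with hF_def
  set F' : ℂ → EuclideanSpace ℝ (Fin N) → ℂ :=
    (fun s τ => F s τ * (-(ψ s τ))) with hF'_def
  have hddj : dd j = -(t : ℂ) := by rw [hdd_def]; simp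
  have hrepr : ∀ (s : ℂ) (τ : EuclideanSpace ℝ (Fin N)),
      p (t • (cV τ - upd w j s)) = ∑ α ∈ S, (a α : ℂ) * ∏ l, (m l s τ) ^ (α l) := by
    intro s τ
    rw [hform]
    refine Finset.sum_congr rfl fun α _ => ?_
    congr 1
  have hm : ∀ (τ : EuclideanSpace ℝ (Fin N)) (s : ℂ) (l : Fin N),
      HasDerivAt (fun s => m l s τ) (dd l) s := by
    intro τ s l
    by_cases hl : l = j
    · subst hl
      have heq : (fun s => m l s τ) = fun s : ℂ => (t : ℂ) * ((τ l : ℂ) - s) := by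
        funext s
        show (t : ℂ) * ((τ l : ℂ) - upd w l s l) = _
        rw [upd_same]
      rw [heq, hddj]
      have h1 : HasDerivAt (fun s : ℂ => (τ l : ℂ) - s) (-1) s := (hasDerivAt_id s).const_sub _
      have h2 := h1.const_mul (t : ℂ)
      rw [show -(t : ℂ) = (t : ℂ) * -1 by ring]
      exact h2
    · have heq : (fun s => m l s τ) = fun _ : ℂ => (t : ℂ) * ((τ l : ℂ) - w l) := by
        funext s
        show (t : ℂ) * ((τ l : ℂ) - upd w j s l) = _
        rw [upd_noteq hl]
      have hddl : dd l = 0 := by rw [hdd_def]; simp [hl]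
      rw [heq, hddl]
      exact hasDerivAt_const _ _
  have hP : ∀ (τ : EuclideanSpace ℝ (Fin N)) (s : ℂ) (α : Fin N → ℕ),
      HasDerivAt (fun s => ∏ l, (m l s τ) ^ (α l))
        (∑ i, (∏ l ∈ Finset.univ.erase i, (m l s τ) ^ (α l)) •
          ((α i : ℂ) * (m i s τ) ^ (α i - 1) * dd i)) s := by
    intro τ s α
    exact HasDerivAt.fun_finsetProd fun i _ => (hm τ s i).pow (α i)
  have hderiv : ∀ (τ : EuclideanSpace ℝ (Fin N)) (s : ℂ),
      HasDerivAt (fun s => F s τ) (F' s τ) s := by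
    intro τ s
    have hφ : HasDerivAt (fun s => ∑ α ∈ S, (a α : ℂ) * ∏ l, (m l s τ) ^ (α l)) (ψ s τ) s :=
      HasDerivAt.fun_sum fun α _ => (hP τ s α).const_mul _
    have h1 := hφ.neg.cexp
    have heq : (fun s => F s τ)
        = fun s => Complex.exp (-(∑ α ∈ S, (a α : ℂ) * ∏ l, (m l s τ) ^ (α l))) := by
      funext s
      show Complex.exp (-(p (t • (cV τ - upd w j s)))) = _
      rw [hrepr]
    have heq2 : F' s τ = Complex.exp (-(∑ α ∈ S, (a α : ℂ) * ∏ l, (m l s τ) ^ (α l))) * (-(ψ s τ)) := by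
      show Complex.exp (-(p (t • (cV τ - upd w j s)))) * (-(ψ s τ)) = _
      rw [hrepr]
    rw [heq, heq2]
    exact h1
  -- bounds
  set Bc : ℝ := ‖w‖ + (‖s₀‖ + 1) with hBc_def
  have hBc0 : 0 ≤ Bc := by
    have hw0 := norm_nonneg w; have hs0 := norm_nonneg s₀; rw [hBc_def]; linarith
  have hcoord : ∀ s ∈ ball s₀ 1, ∀ l, ‖upd w j s l‖ ≤ Bc := by
    intro s hs l
    rw [mem_ball] at hs
    by_cases hl : l = j
    · subst hl
      rw [upd_same]
      have h1 : ‖s‖ - ‖s₀‖ ≤ ‖s - s₀‖ := norm_sub_norm_le s s₀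
      have h2 : ‖s - s₀‖ < 1 := by rwa [← dist_eq_norm]
      have h2' := norm_nonneg w
      rw [hBc_def]; linarith
    · rw [upd_noteq hl]
      have h1 := coord_le_norm w l
      have := norm_nonneg s₀
      rw [hBc_def]; linarith
  obtain ⟨K, c₄, hK, hc₄, hbd⟩ := exp_bound hk hc hS hform hlow t ht Bc hBc0
  set A : ℝ := ∑ α ∈ S, |a α| with hA_def
  have hA0 : 0 ≤ A := Finset.sum_nonneg fun α _ => abs_nonneg _
  have hmq : ∀ s ∈ ball s₀ 1, ∀ (τ : EuclideanSpace ℝ (Fin N)) (l : Fin N),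
      ‖m l s τ‖ ≤ t * (‖τ‖ + Bc) + 1 := by
    intro s hs τ l
    show ‖(t : ℂ) * ((τ l : ℂ) - upd w j s l)‖ ≤ t * (‖τ‖ + Bc) + 1
    have h1 : ‖(t : ℂ) * ((τ l : ℂ) - upd w j s l)‖
        = t * ‖(τ l : ℂ) - upd w j s l‖ := by
      rw [norm_mul, Complex.norm_real, Real.norm_eq_abs, abs_of_pos ht]
    rw [h1]
    have h2 : ‖(τ l : ℂ) - upd w j s l‖
        ≤ ‖(τ l : ℂ)‖ + ‖upd w j s l‖ := norm_sub_le _ _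
    have h3 : ‖(τ l : ℂ)‖ ≤ ‖τ‖ := by
      rw [Complex.norm_real]
      exact coord_le_norm τ l
    have h4 := hcoord s hs l
    have h5 : ‖(τ l : ℂ) - upd w j s l‖ ≤ ‖τ‖ + Bc := by linarith
    have h6 := mul_le_mul_of_nonneg_left h5 ht.le
    linarith
  have hψb : ∀ s ∈ ball s₀ 1, ∀ τ : EuclideanSpace ℝ (Fin N),
      ‖ψ s τ‖ ≤ A * ((N : ℝ) * ((2 * k : ℝ) * t)) * (t * (‖τ‖ + Bc) + 1) ^ (2 * k - 1) := by
    intro s hs τ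
    set Mq : ℝ := t * (‖τ‖ + Bc) + 1 with hMq_def
    have hMq1 : 1 ≤ Mq := by
      have h0 : 0 ≤ t * (‖τ‖ + Bc) := by positivity
      rw [hMq_def]; linarith
    have hMq0 : 0 ≤ Mq := le_trans zero_le_one hMq1
    have hterm : ∀ α ∈ S, ‖∑ i, (∏ l ∈ Finset.univ.erase i, (m l s τ) ^ (α l)) •
        ((α i : ℂ) * (m i s τ) ^ (α i - 1) * dd i)‖
        ≤ (N : ℝ) * ((2 * k : ℝ) * t * Mq ^ (2 * k - 1)) := by
      intro α hα
      have hsum2k := hS α hα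
      have hbound : ∀ i : Fin N, ‖(∏ l ∈ Finset.univ.erase i, (m l s τ) ^ (α l)) •
          ((α i : ℂ) * (m i s τ) ^ (α i - 1) * dd i)‖
          ≤ (2 * k : ℝ) * t * Mq ^ (2 * k - 1) := by
        intro i
        by_cases hαi : α i = 0
        · have hz : ((α i : ℕ) : ℂ) = 0 := by rw [hαi]; simp
          rw [hz, zero_mul, zero_mul, smul_zero, norm_zero]
          positivity
        · have hαi1 : 1 ≤ α i := Nat.one_le_iff_ne_zero.2 hαi
          have hαi2k : α i ≤ 2 * k := by
            rw [← hsum2k]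
            exact Finset.single_le_sum (f := fun l => α l) (fun l _ => Nat.zero_le _)
              (Finset.mem_univ i)
          have hesum : ∑ l ∈ Finset.univ.erase i, α l = 2 * k - α i := by
            have h0 : α i + ∑ l ∈ Finset.univ.erase i, α l = ∑ l, α l :=
              Finset.add_sum_erase Finset.univ α (Finset.mem_univ i)
            omega
          have h1 : ‖(∏ l ∈ Finset.univ.erase i, (m l s τ) ^ (α l)) •
              ((α i : ℂ) * (m i s τ) ^ (α i - 1) * dd i)‖
              = ‖∏ l ∈ Finset.univ.erase i, (m l s τ) ^ (α l)‖ *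
                ‖(α i : ℂ) * (m i s τ) ^ (α i - 1) * dd i‖ := norm_smul _ _
          have h2 : ‖∏ l ∈ Finset.univ.erase i, (m l s τ) ^ (α l)‖ ≤ Mq ^ (2 * k - α i) := by
            rw [← hesum]
            exact norm_prod_pow_le _ _ _ Mq hMq0 fun l _ => hmq s hs τ l
          have h3 : ‖(α i : ℂ) * (m i s τ) ^ (α i - 1) * dd i‖
              ≤ (2 * k : ℝ) * Mq ^ (α i - 1) * t := by
            rw [norm_mul, norm_mul]
            have h4 : ‖((α i : ℕ) : ℂ)‖ ≤ (2 * k : ℝ) := by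
              rw [Complex.norm_natCast]
              exact_mod_cast hαi2k
            have h5 : ‖(m i s τ) ^ (α i - 1)‖ ≤ Mq ^ (α i - 1) := by
              rw [norm_pow]
              exact pow_le_pow_left₀ (norm_nonneg _) (hmq s hs τ i) _
            have h6 : ‖dd i‖ ≤ t := by
              rw [hdd_def]
              by_cases hi : i = j
              · simp only [if_pos hi, norm_neg, Complex.norm_real, Real.norm_eq_abs]
                rw [abs_of_pos ht]
              · simp only [if_neg hi, norm_zero]
                exact ht.le
            have h9 : (0:ℝ) ≤ Mq ^ (α i - 1) := by positivity
            exact mul_le_mul (mul_le_mul h4 h5 (norm_nonneg _) (by positivity)) h6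
              (norm_nonneg _) (by positivity)
          have h11 : Mq ^ (2 * k - α i) * Mq ^ (α i - 1) = Mq ^ (2 * k - 1) := by
            rw [← pow_add]
            congr 1
            omega
          calc ‖(∏ l ∈ Finset.univ.erase i, (m l s τ) ^ (α l)) •
              ((α i : ℂ) * (m i s τ) ^ (α i - 1) * dd i)‖
              = ‖∏ l ∈ Finset.univ.erase i, (m l s τ) ^ (α l)‖ *
                ‖(α i : ℂ) * (m i s τ) ^ (α i - 1) * dd i‖ := h1
            _ ≤ Mq ^ (2 * k - α i) * ((2 * k : ℝ) * Mq ^ (α i - 1) * t) :=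
                mul_le_mul h2 h3 (norm_nonneg _) (by positivity)
            _ = (2 * k : ℝ) * t * (Mq ^ (2 * k - α i) * Mq ^ (α i - 1)) := by ring
            _ = (2 * k : ℝ) * t * Mq ^ (2 * k - 1) := by rw [h11]
      calc ‖∑ i, (∏ l ∈ Finset.univ.erase i, (m l s τ) ^ (α l)) •
          ((α i : ℂ) * (m i s τ) ^ (α i - 1) * dd i)‖
          ≤ ∑ i, ‖(∏ l ∈ Finset.univ.erase i, (m l s τ) ^ (α l)) •
            ((α i : ℂ) * (m i s τ) ^ (α i - 1) * dd i)‖ := norm_sum_le _ _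
        _ ≤ ∑ _i : Fin N, (2 * k : ℝ) * t * Mq ^ (2 * k - 1) :=
            Finset.sum_le_sum fun i _ => hbound i
        _ = (N : ℝ) * ((2 * k : ℝ) * t * Mq ^ (2 * k - 1)) := by
            rw [Finset.sum_const, Finset.card_univ, Fintype.card_fin, nsmul_eq_mul]
    show ‖∑ α ∈ S, (a α : ℂ) * ∑ i, (∏ l ∈ Finset.univ.erase i, (m l s τ) ^ (α l)) •
        ((α i : ℂ) * (m i s τ) ^ (α i - 1) * dd i)‖ ≤ _
    calc ‖∑ α ∈ S, (a α : ℂ) * ∑ i, (∏ l ∈ Finset.univ.erase i, (m l s τ) ^ (α l)) •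
        ((α i : ℂ) * (m i s τ) ^ (α i - 1) * dd i)‖
        ≤ ∑ α ∈ S, ‖(a α : ℂ) * ∑ i, (∏ l ∈ Finset.univ.erase i, (m l s τ) ^ (α l)) •
          ((α i : ℂ) * (m i s τ) ^ (α i - 1) * dd i)‖ := norm_sum_le _ _
      _ ≤ ∑ α ∈ S, |a α| * ((N : ℝ) * ((2 * k : ℝ) * t * Mq ^ (2 * k - 1))) := by
          refine Finset.sum_le_sum fun α hα => ?_
          rw [norm_mul, Complex.norm_real, Real.norm_eq_abs]
          exact mul_le_mul_of_nonneg_left (hterm α hα) (abs_nonneg _)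
      _ = A * ((N : ℝ) * ((2 * k : ℝ) * t * Mq ^ (2 * k - 1))) := by
          rw [hA_def, ← Finset.sum_mul]
      _ = A * ((N : ℝ) * ((2 * k : ℝ) * t)) * Mq ^ (2 * k - 1) := by ring
  -- the dominating function
  set Kc : ℝ := K * (A * ((N : ℝ) * ((2 * k : ℝ) * t)) * (t + t * Bc + 1) ^ (2 * k - 1))
    with hKc_def
  set bound : EuclideanSpace ℝ (Fin N) → ℝ :=
    (fun τ => Kc * (Real.exp (-(c₄ * ‖τ‖ ^ (2 * k))) * (1 + ‖τ‖) ^ (2 * k - 1))) with hbound_def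
  have hbound_int : Integrable bound :=
    (integrable_canonical N k (2 * k - 1) hk c₄ hc₄).const_mul Kc
  have h_bound : ∀ τ : EuclideanSpace ℝ (Fin N), ∀ s ∈ ball s₀ 1, ‖F' s τ‖ ≤ bound τ := by
    intro τ s hs
    have h1 : ‖F' s τ‖ = Real.exp (-(p (t • (cV τ - upd w j s))).re) * ‖ψ s τ‖ := by
      show ‖F s τ * (-(ψ s τ))‖ = _
      rw [norm_mul, norm_neg]
      congr 1
      show ‖Complex.exp (-(p (t • (cV τ - upd w j s))))‖ = _
      rw [Complex.norm_exp, Complex.neg_re]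
    rw [h1]
    have h2 := hbd (upd w j s) τ (hcoord s hs)
    have h3 := hψb s hs τ
    have h4 : t * (‖τ‖ + Bc) + 1 ≤ (t + t * Bc + 1) * (1 + ‖τ‖) := by
      nlinarith [mul_nonneg (mul_nonneg ht.le hBc0) (norm_nonneg τ), norm_nonneg τ, ht.le, hBc0]
    have h5 : (t * (‖τ‖ + Bc) + 1) ^ (2 * k - 1) ≤ ((t + t * Bc + 1) * (1 + ‖τ‖)) ^ (2 * k - 1) :=
      pow_le_pow_left₀ (by positivity) h4 _
    have h6 : ‖ψ s τ‖ ≤ A * ((N : ℝ) * ((2 * k : ℝ) * t)) *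
        ((t + t * Bc + 1) ^ (2 * k - 1) * (1 + ‖τ‖) ^ (2 * k - 1)) := by
      refine h3.trans ?_
      rw [← mul_pow]
      exact mul_le_mul_of_nonneg_left h5 (by positivity)
    calc Real.exp (-(p (t • (cV τ - upd w j s))).re) * ‖ψ s τ‖
        ≤ (K * Real.exp (-(c₄ * ‖τ‖ ^ (2 * k)))) * (A * ((N : ℝ) * ((2 * k : ℝ) * t)) *
          ((t + t * Bc + 1) ^ (2 * k - 1) * (1 + ‖τ‖) ^ (2 * k - 1))) :=
          mul_le_mul h2 h6 (norm_nonneg _) (by positivity)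
      _ = bound τ := by rw [hbound_def, hKc_def]; ring
  have hF_meas : ∀ᶠ s in nhds s₀, AEStronglyMeasurable (F s) volume :=
    Filter.Eventually.of_forall fun s =>
      (integrand_continuous hform t (upd w j s)).aestronglyMeasurable
  have hF_int : Integrable (F s₀) :=
    main_integrable hk hc hS hform hlow t ht (upd w j s₀)
  have hF'_meas : AEStronglyMeasurable (F' s₀) volume := by
    have hcm : ∀ l : Fin N, Continuous (fun τ : EuclideanSpace ℝ (Fin N) => m l s₀ τ) := by
      intro l
      show Continuous (fun τ : EuclideanSpace ℝ (Fin N) => (t : ℂ) * ((τ l : ℂ) - upd w j s₀ l))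
      exact continuous_const.mul
        ((Complex.continuous_ofReal.comp ((continuous_apply l).comp (PiLp.continuous_ofLp 2 _))).sub continuous_const)
    have hcψ : Continuous (fun τ => ψ s₀ τ) := by
      show Continuous (fun τ => ∑ α ∈ S, (a α : ℂ) *
        ∑ i, (∏ l ∈ Finset.univ.erase i, (m l s₀ τ) ^ (α l)) •
          ((α i : ℂ) * (m i s₀ τ) ^ (α i - 1) * dd i))
      refine continuous_finset_sum _ fun α _ => continuous_const.mul ?_
      refine continuous_finset_sum _ fun i _ => Continuous.fun_smul ?_ ?_
      · exact continuous_finset_prod _ fun l _ => (hcm l).pow _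
      · exact (continuous_const.mul ((hcm i).pow _)).mul continuous_const
    exact ((integrand_continuous hform t _).mul hcψ.neg).aestronglyMeasurable
  have h_diff : ∀ᵐ τ : EuclideanSpace ℝ (Fin N) ∂volume, ∀ s ∈ ball s₀ 1,
      HasDerivAt (fun s => F s τ) (F' s τ) s :=
    Filter.Eventually.of_forall fun τ s _ => hderiv τ s
  have h_bd : ∀ᵐ τ : EuclideanSpace ℝ (Fin N) ∂volume, ∀ s ∈ ball s₀ 1,
      ‖F' s τ‖ ≤ bound τ :=
    Filter.Eventually.of_forall fun τ s hs => h_bound τ s hs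
  have hres := hasDerivAt_integral_of_dominated_loc_of_deriv_le (ball_mem_nhds s₀ one_pos) hF_meas hF_int hF'_meas
    h_bd hbound_int h_diff
  exact ⟨_, hres.2⟩

lemma step_const (hk : 1 ≤ k) (hc : 0 < c)
    (hS : ∀ α ∈ S, ∑ j, α j = 2 * k)
    (hform : ∀ z : EuclideanSpace ℂ (Fin N), p z = ∑ α ∈ S, (a α : ℂ) * ∏ j, z j ^ α j)
    (hlow : ∀ x : EuclideanSpace ℝ (Fin N), c * ‖x‖ ^ (2 * k) ≤ (p (cV x)).re)
    (t : ℝ) (ht : 0 < t) (w : EuclideanSpace ℂ (Fin N)) (j : Fin N) :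
    (∫ τ : EuclideanSpace ℝ (Fin N), Complex.exp (-(p (t • (cV τ - w)))))
      = ∫ τ : EuclideanSpace ℝ (Fin N), Complex.exp (-(p (t • (cV τ - upd w j 0)))) := by
  classical
  set h : ℂ → ℂ := (fun s => ∫ τ : EuclideanSpace ℝ (Fin N),
    Complex.exp (-(p (t • (cV τ - upd w j s))))) with hh_def
  have hdiff : ∀ s₀ : ℂ, ∃ d, HasDerivAt h d s₀ := fun s₀ =>
    hasDeriv_h hk hc hS hform hlow t ht w j s₀
  have hDf : Differentiable ℂ h := fun s₀ => ((hdiff s₀).choose_spec).differentiableAt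
  have hper : ∀ (s : ℂ) (r : ℝ), h (s + r) = h s := by
    intro s r
    have hupd : upd w j (s + (r : ℂ)) = upd w j s + cV (WithLp.toLp 2 (fun l => if l = j then r else 0)) := by
      ext l
      rw [PiLp.add_apply]
      by_cases hl : l = j
      · subst hl
        rw [upd_same, upd_same]
        show s + (r : ℂ) = s + ((if l = l then r else 0 : ℝ) : ℂ)
        rw [if_pos rfl]
      · rw [upd_noteq hl, upd_noteq hl]
        show w l = w l + ((if l = j then r else 0 : ℝ) : ℂ)
        rw [if_neg hl]
        simp
    show (∫ τ : EuclideanSpace ℝ (Fin N),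
        Complex.exp (-(p (t • (cV τ - upd w j (s + (r:ℂ))))))) = _
    rw [hupd]
    exact trans_inv t (upd w j s) _
  have hzero : ∀ s : ℂ, fderiv ℂ h s = 0 := by
    intro s
    obtain ⟨d, hd⟩ := hdiff s
    have h2 : HasDerivAt (fun z : ℂ => s + z) 1 0 := (hasDerivAt_id (0:ℂ)).const_add s
    have hd' : HasDerivAt h d ((fun z : ℂ => s + z) 0) := by simpa using hd
    have h3 : HasDerivAt (fun z : ℂ => h (s + z)) (d * 1) 0 := HasDerivAt.comp 0 hd' h2
    have h4 : HasDerivAt (fun z : ℂ => h (s + z)) d ((0:ℝ) : ℂ) := by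
      simpa using h3
    have h5 := h4.comp_ofReal
    have h6 : (fun r : ℝ => h (s + (r : ℂ))) = fun _ : ℝ => h s := funext fun r => hper s r
    rw [h6] at h5
    have h7 : d = 0 := h5.unique (hasDerivAt_const _ _)
    subst h7
    have h8 := hd.hasFDerivAt.fderiv
    rw [h8]
    ext z
    simp
  have hconst := is_const_of_fderiv_eq_zero (𝕜 := ℂ) hDf hzero (w j) 0
  have h9 : h (w j) = ∫ τ : EuclideanSpace ℝ (Fin N), Complex.exp (-(p (t • (cV τ - w)))) := by
    show (∫ τ : EuclideanSpace ℝ (Fin N),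
      Complex.exp (-(p (t • (cV τ - upd w j (w j)))))) = _
    rw [upd_self]
  rw [← h9, hconst]

/-- Zero out the coordinates in `s`. -/
def zeroOn (s : Finset (Fin N)) (w : EuclideanSpace ℂ (Fin N)) : EuclideanSpace ℂ (Fin N) :=
  WithLp.toLp 2 (fun l => if l ∈ s then 0 else w l)

lemma zero_out (hk : 1 ≤ k) (hc : 0 < c)
    (hS : ∀ α ∈ S, ∑ j, α j = 2 * k)
    (hform : ∀ z : EuclideanSpace ℂ (Fin N), p z = ∑ α ∈ S, (a α : ℂ) * ∏ j, z j ^ α j)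
    (hlow : ∀ x : EuclideanSpace ℝ (Fin N), c * ‖x‖ ^ (2 * k) ≤ (p (cV x)).re)
    (t : ℝ) (ht : 0 < t) :
    ∀ (s : Finset (Fin N)) (w : EuclideanSpace ℂ (Fin N)),
    (∫ τ : EuclideanSpace ℝ (Fin N), Complex.exp (-(p (t • (cV τ - w)))))
      = ∫ τ : EuclideanSpace ℝ (Fin N), Complex.exp (-(p (t • (cV τ - zeroOn s w)))) := by
  classical
  intro s
  induction s using Finset.induction_on with
  | empty =>
    intro w
    have h1 : zeroOn (∅ : Finset (Fin N)) w = w := by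
      ext l; simp [zeroOn]
    rw [h1]
  | @insert i s' hins ih =>
    intro w
    have h1 := ih w
    have h2 := step_const hk hc hS hform hlow t ht (zeroOn s' w) i
    have h3 : upd (zeroOn s' w) i 0 = zeroOn (insert i s') w := by
      ext l
      by_cases hl : l = i
      · subst hl
        rw [upd_same]
        simp [zeroOn]
      · rw [upd_noteq hl]
        simp [zeroOn, Finset.mem_insert, hl]
    rw [h1, h2, h3]

end Const

end Stmt3Aux

open Stmt3Aux in
/-- Normalization (property (2) of a good phase function):
for every `w ∈ ℂ^N` and `t > 0`, `∫ e^{-p(t(τ-w))} t^N dτ` converges absolutely and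
`c_p ∫ e^{-p(t(τ-w))} t^N dτ = 1`. -/
theorem stmt3 (N k : ℕ) (hN : 1 ≤ N) (hk : 1 ≤ k)
    (p : EuclideanSpace ℂ (Fin N) → ℂ) (hp : IsRealHomog k p)
    (c C : ℝ) (hc : 0 < c) (hC : 0 < C)
    (hlow : ∀ x : EuclideanSpace ℝ (Fin N), c * ‖x‖ ^ (2 * k) ≤ (p (cV x)).re)
    (hupp : ∀ x : EuclideanSpace ℝ (Fin N), (p (cV x)).re ≤ C * ‖x‖ ^ (2 * k))
    (cp : ℝ) (hcp : 0 < cp)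
    (hcpdef : cp⁻¹ = ∫ x : EuclideanSpace ℝ (Fin N), Real.exp (-(p (cV x)).re)) :
    ∀ w : EuclideanSpace ℂ (Fin N), ∀ t : ℝ, 0 < t →
      Integrable (fun τ : EuclideanSpace ℝ (Fin N) =>
          Complex.exp (-(p (t • (cV τ - w)))) * (t : ℂ) ^ N) ∧
      (cp : ℂ) * ∫ τ : EuclideanSpace ℝ (Fin N),
          Complex.exp (-(p (t • (cV τ - w)))) * (t : ℂ) ^ N = 1 := by
  obtain ⟨a, S, hS, hform⟩ := hp
  intro w t ht
  have hInt0 : Integrable (fun τ : EuclideanSpace ℝ (Fin N) =>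
      Complex.exp (-(p (t • (cV τ - w))))) :=
    main_integrable hk hc hS hform hlow t ht w
  refine ⟨hInt0.mul_const _, ?_⟩
  rw [MeasureTheory.integral_mul_const]
  have h2 := zero_out hk hc hS hform hlow t ht Finset.univ w
  have h3 : zeroOn Finset.univ w = (0 : EuclideanSpace ℂ (Fin N)) := by
    ext l
    simp [zeroOn]
  rw [h3] at h2
  have h4 : ∀ τ : EuclideanSpace ℝ (Fin N),
      t • (cV τ - (0 : EuclideanSpace ℂ (Fin N))) = cV (t • τ) := by
    intro τ
    ext l
    rw [PiLp.smul_apply, PiLp.sub_apply]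
    show t • ((τ l : ℂ) - (0 : EuclideanSpace ℂ (Fin N)) l) = ((t • τ) l : ℂ)
    rw [PiLp.smul_apply]
    show t • ((τ l : ℂ) - 0) = ((t • τ l : ℝ) : ℂ)
    rw [sub_zero, Complex.real_smul, smul_eq_mul]
    push_cast
    ring
  have h5 : (∫ τ : EuclideanSpace ℝ (Fin N),
      Complex.exp (-(p (t • (cV τ - (0 : EuclideanSpace ℂ (Fin N)))))))
      = ∫ τ : EuclideanSpace ℝ (Fin N), Complex.exp (-(p (cV (t • τ)))) := by
    refine integral_congr_ae (Filter.Eventually.of_forall fun τ => ?_)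
    show Complex.exp (-(p (t • (cV τ - (0 : EuclideanSpace ℂ (Fin N))))))
      = Complex.exp (-(p (cV (t • τ))))
    rw [h4 τ]
  have h6 := MeasureTheory.Measure.integral_comp_smul
    (μ := (volume : Measure (EuclideanSpace ℝ (Fin N))))
    (fun x : EuclideanSpace ℝ (Fin N) => Complex.exp (-(p (cV x)))) t
  have h7 : ∀ x : EuclideanSpace ℝ (Fin N), Complex.exp (-(p (cV x)))
      = ((Real.exp (-(p (cV x)).re) : ℝ) : ℂ) := by
    intro x
    have h8 : p (cV x) = ((∑ α ∈ S, a α * ∏ l, x l ^ α l : ℝ) : ℂ) := by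
      rw [hform]
      simp only [cV]
      push_cast
      rfl
    have h9 : (p (cV x)).re = ∑ α ∈ S, a α * ∏ l, x l ^ α l := by
      rw [h8, Complex.ofReal_re]
    calc Complex.exp (-(p (cV x)))
        = Complex.exp (-((∑ α ∈ S, a α * ∏ l, x l ^ α l : ℝ) : ℂ)) := by rw [h8]
      _ = ((Real.exp (-(∑ α ∈ S, a α * ∏ l, x l ^ α l)) : ℝ) : ℂ) := by
          rw [← Complex.ofReal_neg, Complex.ofReal_exp]
      _ = _ := by rw [h9]
  have h10 : (∫ x : EuclideanSpace ℝ (Fin N), Complex.exp (-(p (cV x))))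
      = ((cp⁻¹ : ℝ) : ℂ) := by
    calc (∫ x : EuclideanSpace ℝ (Fin N), Complex.exp (-(p (cV x))))
        = ∫ x : EuclideanSpace ℝ (Fin N), ((Real.exp (-(p (cV x)).re) : ℝ) : ℂ) :=
          integral_congr_ae (Filter.Eventually.of_forall fun x => h7 x)
      _ = ((∫ x : EuclideanSpace ℝ (Fin N), Real.exp (-(p (cV x)).re) : ℝ) : ℂ) :=
          integral_ofReal
      _ = ((cp⁻¹ : ℝ) : ℂ) := by rw [← hcpdef]
  rw [h2, h5, h6, h10, finrank_euclideanSpace_fin]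
  rw [abs_of_pos (show (0:ℝ) < (t ^ N)⁻¹ by positivity)]
  rw [Complex.real_smul]
  have hcp0 : (cp : ℂ) ≠ 0 := Complex.ofReal_ne_zero.2 hcp.ne'
  have ht0 : (t : ℂ) ≠ 0 := Complex.ofReal_ne_zero.2 ht.ne'
  push_cast
  field_simp

end
end

section
/- Let p, c_p be as above, let K ⊂ ℝ^N be compact, and let μ be an analytic functional carried by K. Then for each constant L > 0 there exists C_L > 0 such that |F_p μ(τ, ξ)| ≤ C_L e^{L|ξ|} for all (τ, ξ) ∈ ℝ^N × ℝ^N. -/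
open MeasureTheory Metric Complex Filter

noncomputable section

/-- The bilinear pairing `z · w = ∑ j, z j * w j` on `ℂ^N`. -/
def dotC {N : ℕ} (z w : EuclideanSpace ℂ (Fin N)) : ℂ := ∑ j, z j * w j

lemma coord_norm_le {𝕜 : Type*} [RCLike 𝕜] {N : ℕ} (u : EuclideanSpace 𝕜 (Fin N)) (j : Fin N) :
    ‖u j‖ ≤ ‖u‖ := by
  rw [EuclideanSpace.norm_eq]
  have h1 : ‖u j‖ = Real.sqrt (‖u j‖ ^ 2) := by
    rw [Real.sqrt_sq (norm_nonneg _)]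
  rw [h1]
  apply Real.sqrt_le_sqrt
  exact Finset.single_le_sum (f := fun i => ‖u i‖ ^ 2) (fun i _ => by positivity)
    (Finset.mem_univ j)

lemma norm_pow_sub_pow_le' (a b : ℂ) (R : ℝ) (ha : ‖a‖ ≤ R) (hb : ‖b‖ ≤ R) (m : ℕ) :
    ‖a ^ m - b ^ m‖ ≤ m * R ^ (m - 1) * ‖a - b‖ := by
  have hR : 0 ≤ R := le_trans (norm_nonneg a) ha
  induction m with
  | zero => simp
  | succ n ih =>
    have key : a ^ (n + 1) - b ^ (n + 1) = (a - b) * a ^ n + b * (a ^ n - b ^ n) := by ring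
    have h2 : ‖a ^ (n + 1) - b ^ (n + 1)‖ ≤ ‖a - b‖ * ‖a‖ ^ n + ‖b‖ * ‖a ^ n - b ^ n‖ := by
      rw [key]
      refine (norm_add_le _ _).trans ?_
      simp [norm_mul, norm_pow]
    have h3 : ‖a‖ ^ n ≤ R ^ n := pow_le_pow_left₀ (norm_nonneg a) ha n
    have h4 : ‖b‖ * ‖a ^ n - b ^ n‖ ≤ R * (n * R ^ (n - 1) * ‖a - b‖) := by
      apply mul_le_mul hb ih (norm_nonneg _) hR
    have h5 : R * (n * R ^ (n - 1) * ‖a - b‖) ≤ n * R ^ n * ‖a - b‖ := by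
      rcases Nat.eq_zero_or_pos n with hn | hn
      · simp [hn]
      · have : R * (↑n * R ^ (n - 1) * ‖a - b‖) = ↑n * (R * R ^ (n - 1)) * ‖a - b‖ := by ring
        rw [this, ← pow_succ' R (n - 1), Nat.sub_add_cancel hn]
    calc ‖a ^ (n + 1) - b ^ (n + 1)‖ ≤ ‖a - b‖ * ‖a‖ ^ n + ‖b‖ * ‖a ^ n - b ^ n‖ := h2
      _ ≤ ‖a - b‖ * R ^ n + ↑n * R ^ n * ‖a - b‖ :=
          add_le_add (by gcongr) (h4.trans h5)
      _ = (↑n + 1) * R ^ n * ‖a - b‖ := by ring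
      _ = ↑(n + 1) * R ^ ((n + 1) - 1) * ‖a - b‖ := by push_cast; ring_nf

lemma norm_prod_pow_le {ι : Type*} (s : Finset ι) (α : ι → ℕ) (z : ι → ℂ) (R : ℝ)
    (hR : 0 ≤ R) (hz : ∀ j, ‖z j‖ ≤ R) :
    ‖∏ j ∈ s, z j ^ α j‖ ≤ R ^ (∑ j ∈ s, α j) := by
  calc ‖∏ j ∈ s, z j ^ α j‖ = ∏ j ∈ s, ‖z j‖ ^ α j := by
        rw [norm_prod]; simp [norm_pow]
    _ ≤ ∏ j ∈ s, R ^ α j :=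
        Finset.prod_le_prod (fun i _ => by positivity)
          (fun i _ => pow_le_pow_left₀ (norm_nonneg _) (hz i) _)
    _ = R ^ (∑ j ∈ s, α j) := Finset.prod_pow_eq_pow_sum s α R

lemma prod_pow_sub_prod_pow_le {ι : Type*} (s : Finset ι) (α : ι → ℕ) (z w : ι → ℂ)
    (R δ : ℝ) (hR : 0 ≤ R) (hδ : 0 ≤ δ)
    (hz : ∀ j, ‖z j‖ ≤ R) (hw : ∀ j, ‖w j‖ ≤ R) (hd : ∀ j, ‖z j - w j‖ ≤ δ) :
    ‖∏ j ∈ s, z j ^ α j - ∏ j ∈ s, w j ^ α j‖ ≤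
      (∑ j ∈ s, α j) * R ^ ((∑ j ∈ s, α j) - 1) * δ := by
  classical
  induction s using Finset.induction_on with
  | empty => simp
  | @insert a s ha ih =>
    rw [Finset.prod_insert ha, Finset.prod_insert ha, Finset.sum_insert ha]
    set m := α a with hm
    set n := ∑ j ∈ s, α j with hn
    have key : z a ^ m * ∏ j ∈ s, z j ^ α j - w a ^ m * ∏ j ∈ s, w j ^ α j =
        (z a ^ m - w a ^ m) * ∏ j ∈ s, z j ^ α j +
        w a ^ m * (∏ j ∈ s, z j ^ α j - ∏ j ∈ s, w j ^ α j) := by ring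
    have hP : ‖∏ j ∈ s, z j ^ α j‖ ≤ R ^ n := norm_prod_pow_le s α z R hR hz
    have hwa : ‖w a ^ m‖ ≤ R ^ m := by
      rw [norm_pow]; exact pow_le_pow_left₀ (norm_nonneg _) (hw a) m
    have t1 : ‖(z a ^ m - w a ^ m) * ∏ j ∈ s, z j ^ α j‖ ≤ m * R ^ (m + n - 1) * δ := by
      rw [norm_mul]
      rcases Nat.eq_zero_or_pos m with h0 | h0
      · simp [h0]
      · have b1 : ‖z a ^ m - w a ^ m‖ ≤ m * R ^ (m - 1) * δ := by
          refine (norm_pow_sub_pow_le' (z a) (w a) R (hz a) (hw a) m).trans ?_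
          gcongr; exact hd a
        calc ‖z a ^ m - w a ^ m‖ * ‖∏ j ∈ s, z j ^ α j‖
            ≤ (m * R ^ (m - 1) * δ) * R ^ n := by
              apply mul_le_mul b1 hP (norm_nonneg _) (by positivity)
          _ = m * (R ^ (m - 1) * R ^ n) * δ := by ring
          _ = m * R ^ (m + n - 1) * δ := by
              rw [← pow_add, show m - 1 + n = m + n - 1 from by omega]
    have t2 : ‖w a ^ m * (∏ j ∈ s, z j ^ α j - ∏ j ∈ s, w j ^ α j)‖ ≤
        n * R ^ (m + n - 1) * δ := by
      rw [norm_mul]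
      rcases Nat.eq_zero_or_pos n with h0 | h0
      · have hzero : ‖∏ j ∈ s, z j ^ α j - ∏ j ∈ s, w j ^ α j‖ ≤ 0 := by
          have := ih
          simp only [← hn, h0] at this
          simpa [h0] using this
        have : ‖∏ j ∈ s, z j ^ α j - ∏ j ∈ s, w j ^ α j‖ = 0 :=
          le_antisymm hzero (norm_nonneg _)
        simp [h0, this]
      · calc ‖w a ^ m‖ * ‖∏ j ∈ s, z j ^ α j - ∏ j ∈ s, w j ^ α j‖
            ≤ R ^ m * (n * R ^ (n - 1) * δ) := by
              apply mul_le_mul hwa ih (norm_nonneg _) (by positivity)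
          _ = n * (R ^ m * R ^ (n - 1)) * δ := by ring
          _ = n * R ^ (m + n - 1) * δ := by
              rw [← pow_add, show m + (n - 1) = m + n - 1 from by omega]
    calc ‖z a ^ m * ∏ j ∈ s, z j ^ α j - w a ^ m * ∏ j ∈ s, w j ^ α j‖
        ≤ ‖(z a ^ m - w a ^ m) * ∏ j ∈ s, z j ^ α j‖ +
          ‖w a ^ m * (∏ j ∈ s, z j ^ α j - ∏ j ∈ s, w j ^ α j)‖ := by
          rw [key]; exact norm_add_le _ _
      _ ≤ m * R ^ (m + n - 1) * δ + n * R ^ (m + n - 1) * δ := add_le_add t1 t2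
      _ = (↑(m + n)) * R ^ (m + n - 1) * δ := by push_cast; ring


lemma p_sub_p_le {N : ℕ} (a : (Fin N → ℕ) → ℝ) (S : Finset (Fin N → ℕ)) (d : ℕ)
    (hdeg : ∀ α ∈ S, ∑ j, α j = d) (z w : Fin N → ℂ) (R δ : ℝ) (hR : 0 ≤ R) (hδ : 0 ≤ δ)
    (hz : ∀ j, ‖z j‖ ≤ R) (hw : ∀ j, ‖w j‖ ≤ R) (hdd : ∀ j, ‖z j - w j‖ ≤ δ) :
    ‖(∑ α ∈ S, (a α : ℂ) * ∏ j, z j ^ α j) - ∑ α ∈ S, (a α : ℂ) * ∏ j, w j ^ α j‖ ≤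
      (∑ α ∈ S, |a α|) * (d * R ^ (d - 1) * δ) := by
  rw [← Finset.sum_sub_distrib]
  refine (norm_sum_le _ _).trans ?_
  rw [Finset.sum_mul]
  apply Finset.sum_le_sum
  intro α hα
  have : (a α : ℂ) * ∏ j, z j ^ α j - (a α : ℂ) * ∏ j, w j ^ α j =
      (a α : ℂ) * ((∏ j, z j ^ α j) - ∏ j, w j ^ α j) := by ring
  rw [this, norm_mul, Complex.norm_real, Real.norm_eq_abs]
  refine mul_le_mul_of_nonneg_left ?_ (abs_nonneg _)
  have := prod_pow_sub_prod_pow_le Finset.univ α z w R δ hR hδ hz hw hdd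
  rwa [hdeg α hα] at this

lemma delta_choice (k : ℕ) (hk : 1 ≤ k) (M c L : ℝ) (hM : 0 ≤ M) (hc : 0 < c) (hL : 0 < L) :
    ∃ δ : ℝ, 0 < δ ∧ δ ≤ L / 2 ∧
      ∀ t : ℝ, 0 ≤ t → M * δ * (t + δ) ^ (2 * k - 1) - c * t ^ (2 * k) ≤ L / 2 := by
  set δ : ℝ := min 1 (min (c / (M * 2 ^ (2 * k - 1) + 1)) (min (L / (M * 2 ^ (2 * k) + 1)) (L / 2))) with hδdef
  have hδpos : 0 < δ := by
    apply lt_min (by norm_num)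
    apply lt_min (by positivity)
    exact lt_min (by positivity) (by positivity)
  have hδ1 : δ ≤ 1 := min_le_left _ _
  have hδc : δ ≤ c / (M * 2 ^ (2 * k - 1) + 1) := (min_le_right _ _).trans (min_le_left _ _)
  have hδL : δ ≤ L / (M * 2 ^ (2 * k) + 1) :=
    ((min_le_right _ _).trans (min_le_right _ _)).trans (min_le_left _ _)
  have hδL2 : δ ≤ L / 2 :=
    ((min_le_right _ _).trans (min_le_right _ _)).trans (min_le_right _ _)
  refine ⟨δ, hδpos, hδL2, ?_⟩
  intro t ht
  have hpow2 : (2 : ℝ) ^ (2 * k) = 2 * 2 ^ (2 * k - 1) := by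
    rw [← pow_succ']
    congr 1
    omega
  rcases le_or_gt t 1 with h1 | h1
  · have hb : (t + δ) ^ (2 * k - 1) ≤ 2 ^ (2 * k - 1) := by
      apply pow_le_pow_left₀ (by positivity)
      linarith
    have hub : M * δ * (t + δ) ^ (2 * k - 1) ≤ M * δ * 2 ^ (2 * k - 1) := by
      apply mul_le_mul_of_nonneg_left hb (by positivity)
    have key : M * δ * 2 ^ (2 * k - 1) ≤ L / 2 := by
      have h2 : δ * (M * 2 ^ (2 * k) + 1) ≤ L := by
        rw [← le_div_iff₀ (by positivity)]
        exact hδL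
      nlinarith [hδpos.le, pow_pos (show (0:ℝ) < 2 by norm_num) (2 * k - 1)]
    nlinarith [pow_nonneg ht (2 * k)]
  · have hb : (t + δ) ^ (2 * k - 1) ≤ 2 ^ (2 * k - 1) * t ^ (2 * k) := by
      calc (t + δ) ^ (2 * k - 1) ≤ (2 * t) ^ (2 * k - 1) := by
            apply pow_le_pow_left₀ (by positivity)
            linarith
        _ = 2 ^ (2 * k - 1) * t ^ (2 * k - 1) := mul_pow _ _ _
        _ ≤ 2 ^ (2 * k - 1) * t ^ (2 * k) := by
            apply mul_le_mul_of_nonneg_left _ (by positivity)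
            exact pow_le_pow_right₀ h1.le (by omega)
    have key : M * δ * 2 ^ (2 * k - 1) ≤ c := by
      have h2 : δ * (M * 2 ^ (2 * k - 1) + 1) ≤ c := by
        rw [← le_div_iff₀ (by positivity)]
        exact hδc
      nlinarith [hδpos.le]
    have : M * δ * (t + δ) ^ (2 * k - 1) ≤ c * t ^ (2 * k) := by
      calc M * δ * (t + δ) ^ (2 * k - 1) ≤ M * δ * (2 ^ (2 * k - 1) * t ^ (2 * k)) := by
            apply mul_le_mul_of_nonneg_left hb (by positivity)
        _ = (M * δ * 2 ^ (2 * k - 1)) * t ^ (2 * k) := by ring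
        _ ≤ c * t ^ (2 * k) := by
            apply mul_le_mul_of_nonneg_right key (by positivity)
    linarith [hL]

lemma diff_finset_prod {ι : Type*} {E : Type*} [NormedAddCommGroup E] [NormedSpace ℂ E]
    (s : Finset ι) (f : ι → E → ℂ) (h : ∀ i ∈ s, Differentiable ℂ (f i)) :
    Differentiable ℂ (fun x => ∏ i ∈ s, f i x) := by
  classical
  induction s using Finset.induction_on with
  | empty => simpa using differentiable_const (1 : ℂ)
  | @insert a s ha ih =>
    simp only [Finset.prod_insert ha]
    exact (h a (Finset.mem_insert_self a s)).mul
      (ih fun i hi => h i (Finset.mem_insert_of_mem hi))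


/-- Global a priori bound for the FBI transform of an analytic functional
carried by a compact set `K ⊂ ℝ^N`: for every `L > 0` there is `C_L > 0` with
`|F_p μ(τ,ξ)| ≤ C_L e^{L|ξ|}` on `ℝ^N × ℝ^N`. -/
theorem stmt7 (N k : ℕ) (hN : 1 ≤ N) (hk : 1 ≤ k)
    (p : EuclideanSpace ℂ (Fin N) → ℂ) (hp : IsRealHomog k p)
    (c C : ℝ) (hc : 0 < c) (hC : 0 < C)
    (hlow : ∀ x : EuclideanSpace ℝ (Fin N), c * ‖x‖ ^ (2 * k) ≤ (p (cV x)).re)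
    (hupp : ∀ x : EuclideanSpace ℝ (Fin N), (p (cV x)).re ≤ C * ‖x‖ ^ (2 * k))
    (cp : ℝ) (hcp : 0 < cp)
    (hcpdef : cp⁻¹ = ∫ x : EuclideanSpace ℝ (Fin N), Real.exp (-(p (cV x)).re))
    (K : Set (EuclideanSpace ℝ (Fin N))) (hK : IsCompact K)
    (μ : (EuclideanSpace ℂ (Fin N) → ℂ) →ₗ[ℂ] ℂ)
    (hμ : ∀ δ > (0 : ℝ), ∃ Cδ > (0 : ℝ), ∀ h : EuclideanSpace ℂ (Fin N) → ℂ,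
      Differentiable ℂ h →
        ‖μ h‖ ≤ Cδ * sSup ((fun z => ‖h z‖) '' Metric.thickening δ (cV '' K))) :
    ∀ L > (0 : ℝ), ∃ CL > (0 : ℝ), ∀ τ ξ : EuclideanSpace ℝ (Fin N),
      ‖(cp : ℂ) * μ (fun w => Complex.exp
          (Complex.I * dotC (cV τ - w) (cV ξ) - (‖ξ‖ : ℂ) * p (cV τ - w)))‖ ≤
        CL * Real.exp (L * ‖ξ‖) := by
  obtain ⟨a, S, hdeg, hrep⟩ := hp
  set A : ℝ := ∑ α ∈ S, |a α| with hA
  have hA0 : 0 ≤ A := Finset.sum_nonneg fun _ _ => abs_nonneg _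
  intro L hL
  obtain ⟨δ, hδpos, hδL2, hδkey⟩ :=
    delta_choice k hk ((2 * k : ℕ) * A) c L (by positivity) hc hL
  obtain ⟨Cδ, hCδ, hbound⟩ := hμ δ hδpos
  refine ⟨cp * Cδ, by positivity, ?_⟩
  intro τ ξ
  -- differentiability
  have dcoord : ∀ j, Differentiable ℂ (fun w : EuclideanSpace ℂ (Fin N) => w j) := by
    intro j
    exact (EuclideanSpace.proj j : EuclideanSpace ℂ (Fin N) →L[ℂ] ℂ).differentiable
  have dp : Differentiable ℂ p := by
    have hpe : p = fun z => ∑ α ∈ S, (a α : ℂ) * ∏ j, z j ^ α j := funext hrep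
    rw [hpe]
    apply Differentiable.fun_sum
    intro α _
    apply Differentiable.const_mul
    exact diff_finset_prod Finset.univ (fun j (z : EuclideanSpace ℂ (Fin N)) => z j ^ α j)
      (fun j _ => (dcoord j).pow _)
  have dsub : Differentiable ℂ (fun w : EuclideanSpace ℂ (Fin N) => cV τ - w) :=
    (differentiable_const _).sub differentiable_id
  have dd : Differentiable ℂ (fun w : EuclideanSpace ℂ (Fin N) => dotC (cV τ - w) (cV ξ)) := by
    simp only [dotC]
    apply Differentiable.fun_sum
    intro j _
    apply Differentiable.mul_const
    exact (differentiable_const _).sub (dcoord j)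
  set h : EuclideanSpace ℂ (Fin N) → ℂ := fun w => Complex.exp
      (Complex.I * dotC (cV τ - w) (cV ξ) - (‖ξ‖ : ℂ) * p (cV τ - w)) with hh
  have hdiff : Differentiable ℂ h := by
    apply Differentiable.cexp
    exact (dd.const_mul Complex.I).sub ((dp.comp dsub).const_mul _)
  -- pointwise bound on the thickening
  have claim : ∀ w ∈ Metric.thickening δ (cV '' K), ‖h w‖ ≤ Real.exp (L * ‖ξ‖) := by
    intro w hw
    rw [Metric.mem_thickening_iff] at hw
    obtain ⟨z0, hz0, hdist⟩ := hw
    obtain ⟨x, hxK, rfl⟩ := hz0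
    set u : EuclideanSpace ℝ (Fin N) := τ - x with hu
    set v : EuclideanSpace ℂ (Fin N) := w - cV x with hv
    have hvδ : ‖v‖ ≤ δ := by
      rw [hv, ← dist_eq_norm]
      exact hdist.le
    have hcVsub : cV u = cV τ - cV x := by
      ext j
      simp [cV, hu, PiLp.sub_apply, Complex.ofReal_sub]
    have huv : cV τ - w = cV u - v := by
      rw [hcVsub, hv]
      abel
    -- coordinate bounds
    set R : ℝ := ‖u‖ + δ with hR
    have hR0 : 0 ≤ R := by positivity
    have hzb : ∀ j, ‖(cV u - v) j‖ ≤ R := by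
      intro j
      have h1 : (cV u - v) j = (u j : ℂ) - v j := by simp [cV, PiLp.sub_apply]
      rw [h1]
      refine (norm_sub_le _ _).trans ?_
      have h2 : ‖(u j : ℂ)‖ ≤ ‖u‖ := by
        rw [Complex.norm_real]
        exact coord_norm_le u j
      have h3 : ‖v j‖ ≤ δ := (coord_norm_le v j).trans hvδ
      exact add_le_add h2 h3
    have hwb : ∀ j, ‖(cV u) j‖ ≤ R := by
      intro j
      calc ‖(cV u) j‖ = ‖(u j : ℂ)‖ := rfl
        _ = ‖u j‖ := Complex.norm_real _
        _ ≤ ‖u‖ := coord_norm_le u j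
        _ ≤ R := by rw [hR]; linarith
    have hdb : ∀ j, ‖(cV u - v) j - (cV u) j‖ ≤ δ := by
      intro j
      have h1 : (cV u - v) j - (cV u) j = -(v j) := by simp [cV, PiLp.sub_apply]
      rw [h1, norm_neg]
      exact (coord_norm_le v j).trans hvδ
    -- real part of p
    have hpdiff : ‖p (cV u - v) - p (cV u)‖ ≤ A * ((2 * k : ℕ) * R ^ (2 * k - 1) * δ) := by
      rw [hrep (cV u - v), hrep (cV u)]
      exact p_sub_p_le a S (2 * k) hdeg (fun j => (cV u - v) j) (fun j => (cV u) j)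
        R δ hR0 hδpos.le hzb hwb hdb
    have hpre : c * ‖u‖ ^ (2 * k) - A * ((2 * k : ℕ) * R ^ (2 * k - 1) * δ) ≤
        (p (cV u - v)).re := by
      have h1 : |(p (cV u - v) - p (cV u)).re| ≤ ‖p (cV u - v) - p (cV u)‖ := by
        exact Complex.abs_re_le_norm _
      rw [Complex.sub_re] at h1
      have h2 := hlow u
      have h3 := abs_le.mp h1
      linarith [h3.1, hpdiff]
    -- imaginary part of the dot product
    have hDim : |(dotC (cV u - v) (cV ξ)).im| ≤ δ * ‖ξ‖ := by
      have him : (dotC (cV u - v) (cV ξ)).im = ∑ j, (-(v j).im * ξ j) := by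
        rw [dotC, Complex.im_sum]
        congr 1
        funext j
        have h1 : (cV u - v) j = (u j : ℂ) - v j := by simp [cV, PiLp.sub_apply]
        have h2 : (cV ξ) j = (ξ j : ℂ) := rfl
        rw [h1, h2, Complex.mul_im]
        simp [Complex.sub_im, Complex.sub_re, Complex.ofReal_im, Complex.ofReal_re]
      rw [him]
      refine (Finset.abs_sum_le_sum_abs _ _).trans ?_
      have hcs : ∑ j, |(-(v j).im * ξ j)| ≤ ‖v‖ * ‖ξ‖ := by
        have h1 : ∀ j, |(-(v j).im * ξ j)| ≤ ‖v j‖ * |ξ j| := by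
          intro j
          rw [abs_mul, abs_neg]
          apply mul_le_mul_of_nonneg_right _ (abs_nonneg _)
          exact Complex.abs_im_le_norm _
        refine (Finset.sum_le_sum fun j _ => h1 j).trans ?_
        have h2 := Real.sum_mul_le_sqrt_mul_sqrt Finset.univ
          (fun j => ‖v j‖) (fun j => |ξ j|)
        refine h2.trans ?_
        have hv' : Real.sqrt (∑ j, ‖v j‖ ^ 2) = ‖v‖ := by
          rw [EuclideanSpace.norm_eq]
        have hξ' : Real.sqrt (∑ j, |ξ j| ^ 2) = ‖ξ‖ := by
          simp [EuclideanSpace.norm_eq, Real.norm_eq_abs]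
        rw [hv', hξ']
      refine hcs.trans ?_
      exact mul_le_mul_of_nonneg_right hvδ (norm_nonneg _)
    -- assemble the exponent bound
    have hnorm : ‖h w‖ = Real.exp ((Complex.I * dotC (cV τ - w) (cV ξ) -
        (‖ξ‖ : ℂ) * p (cV τ - w)).re) := by
      rw [hh, Complex.norm_exp]
    rw [hnorm, huv]
    apply Real.exp_le_exp.mpr
    rw [Complex.sub_re, Complex.mul_re, Complex.re_ofReal_mul]
    simp only [Complex.I_re, Complex.I_im, zero_mul, one_mul, zero_sub]
    set D := dotC (cV u - v) (cV ξ)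
    set t : ℝ := ‖u‖ with ht
    have ht0 : 0 ≤ t := norm_nonneg _
    have key1 : -D.im ≤ δ * ‖ξ‖ := by
      have := abs_le.mp hDim
      linarith [this.1]
    have key2 : -(‖ξ‖ * (p (cV u - v)).re) ≤
        ‖ξ‖ * ((2 * k : ℕ) * A * δ * (t + δ) ^ (2 * k - 1) - c * t ^ (2 * k)) := by
      have h1 : (p (cV u - v)).re ≥ c * t ^ (2 * k) -
          (2 * k : ℕ) * A * δ * (t + δ) ^ (2 * k - 1) := by
        have : A * ((2 * k : ℕ) * R ^ (2 * k - 1) * δ) =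
            (2 * k : ℕ) * A * δ * (t + δ) ^ (2 * k - 1) := by
          rw [hR, ht]; ring
        linarith [hpre, this ▸ hpre]
      nlinarith [norm_nonneg ξ]
    have key3 : ((2 * k : ℕ) * A) * δ * (t + δ) ^ (2 * k - 1) - c * t ^ (2 * k) ≤ L / 2 :=
      hδkey t ht0
    calc -D.im - ‖ξ‖ * (p (cV u - v)).re ≤
        δ * ‖ξ‖ + ‖ξ‖ * ((2 * k : ℕ) * A * δ * (t + δ) ^ (2 * k - 1) - c * t ^ (2 * k)) := by
          linarith
      _ ≤ (L / 2) * ‖ξ‖ + ‖ξ‖ * (L / 2) := by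
          have h4 : δ * ‖ξ‖ ≤ (L / 2) * ‖ξ‖ :=
            mul_le_mul_of_nonneg_right hδL2 (norm_nonneg ξ)
          have h5 : ‖ξ‖ * ((2 * k : ℕ) * A * δ * (t + δ) ^ (2 * k - 1) - c * t ^ (2 * k)) ≤
              ‖ξ‖ * (L / 2) := mul_le_mul_of_nonneg_left key3 (norm_nonneg ξ)
          linarith
      _ = L * ‖ξ‖ := by ring
  -- conclude
  have hsup : sSup ((fun z => ‖h z‖) '' Metric.thickening δ (cV '' K)) ≤
      Real.exp (L * ‖ξ‖) := by
    apply Real.sSup_le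
    · rintro r ⟨w, hw, rfl⟩
      exact claim w hw
    · exact (Real.exp_pos _).le
  have hμh := hbound h hdiff
  calc ‖(cp : ℂ) * μ h‖ = cp * ‖μ h‖ := by
        rw [norm_mul, Complex.norm_real, Real.norm_eq_abs, abs_of_pos hcp]
    _ ≤ cp * (Cδ * Real.exp (L * ‖ξ‖)) := by
        apply mul_le_mul_of_nonneg_left _ hcp.le
        refine hμh.trans ?_
        exact mul_le_mul_of_nonneg_left hsup hCδ.le
    _ = cp * Cδ * Real.exp (L * ‖ξ‖) := by ring

end
end

section
/- Let p, c_p be as above, and let ρ > 0 and c′ > 0 satisfy Re p(z) ≥ c′|z|^{2k} for all z = x + iy ∈ ℂ^N with |y| ≤ ρ|x|. Let K, K′ ⊂ ℝ^N be disjoint compact sets. Then there exist a > 0 and δ > 0 such that for every linear functional μ on the space of entire functions and every constant C > 0 satisfying |μ(h)| ≤ C sup_{z ∈ K_δ} |h(z)| for all entire h, one has |F_p μ(τ, ξ)| ≤ C c_p e^{−a|ξ|} for all τ ∈ K′ and all ξ ∈ ℝ^N. -/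
open MeasureTheory Metric Complex Filter

noncomputable section

lemma norm_reV_le {N : ℕ} (u : EuclideanSpace ℂ (Fin N)) : ‖reV u‖ ≤ ‖u‖ := by
  rw [EuclideanSpace.norm_eq, EuclideanSpace.norm_eq]
  apply Real.sqrt_le_sqrt
  apply Finset.sum_le_sum
  intro j _
  have : ‖(reV u) j‖ ≤ ‖u j‖ := by
    simpa [reV, Real.norm_eq_abs] using Complex.abs_re_le_norm (u j)
  exact pow_le_pow_left₀ (norm_nonneg _) this 2

lemma norm_imV_le {N : ℕ} (u : EuclideanSpace ℂ (Fin N)) : ‖imV u‖ ≤ ‖u‖ := by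
  rw [EuclideanSpace.norm_eq, EuclideanSpace.norm_eq]
  apply Real.sqrt_le_sqrt
  apply Finset.sum_le_sum
  intro j _
  have : ‖(imV u) j‖ ≤ ‖u j‖ := by
    simpa [imV, Real.norm_eq_abs] using Complex.abs_im_le_norm (u j)
  exact pow_le_pow_left₀ (norm_nonneg _) this 2

lemma reV_sub {N : ℕ} (u v : EuclideanSpace ℂ (Fin N)) : reV (u - v) = reV u - reV v := by
  ext j; simp [reV]

lemma imV_sub {N : ℕ} (u v : EuclideanSpace ℂ (Fin N)) : imV (u - v) = imV u - imV v := by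
  ext j; simp [imV]

lemma reV_cV {N : ℕ} (x : EuclideanSpace ℝ (Fin N)) : reV (cV x) = x := by
  ext j; simp [reV, cV]

lemma imV_cV {N : ℕ} (x : EuclideanSpace ℝ (Fin N)) : imV (cV x) = 0 := by
  ext j; simp [imV, cV]

lemma re_I_dotC {N : ℕ} (v : EuclideanSpace ℂ (Fin N)) (ξ : EuclideanSpace ℝ (Fin N)) :
    (Complex.I * dotC v (cV ξ)).re ≤ ‖imV v‖ * ‖ξ‖ := by
  have h1 : (Complex.I * dotC v (cV ξ)).re = ∑ j, (-(imV v) j) * ξ j := by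
    simp [dotC, Complex.mul_re, Complex.re_sum, Complex.im_sum, cV, imV, Finset.mul_sum]
  have h2 : ∑ j, (-(imV v) j) * ξ j = inner ℝ (-(imV v) : EuclideanSpace ℝ (Fin N)) ξ := by
    rw [PiLp.inner_apply]; simp [RCLike.inner_apply, mul_comm]
  calc (Complex.I * dotC v (cV ξ)).re = inner ℝ (-(imV v) : EuclideanSpace ℝ (Fin N)) ξ := by
        rw [h1, h2]
    _ ≤ ‖(-(imV v) : EuclideanSpace ℝ (Fin N))‖ * ‖ξ‖ := real_inner_le_norm _ _
    _ = ‖imV v‖ * ‖ξ‖ := by rw [norm_neg]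

lemma diff_finprod {E : Type*} [NormedAddCommGroup E] [NormedSpace ℂ E] {ι : Type*}
    (u : Finset ι) (f : ι → E → ℂ) (hf : ∀ i ∈ u, Differentiable ℂ (f i)) :
    Differentiable ℂ (fun z => ∏ i ∈ u, f i z) := by
  classical
  induction u using Finset.induction_on with
  | empty => simpa using differentiable_const (1 : ℂ)
  | @insert i s hni ih =>
    simp only [Finset.prod_insert hni]
    exact (hf i (Finset.mem_insert_self i s)).mul
      (ih fun j hj => hf j (Finset.mem_insert_of_mem hj))

lemma diff_coord {N : ℕ} (j : Fin N) :
    Differentiable ℂ (fun z : EuclideanSpace ℂ (Fin N) => z j) :=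
  (EuclideanSpace.proj j : EuclideanSpace ℂ (Fin N) →L[ℂ] ℂ).differentiable

lemma diff_p {N k : ℕ} {p : EuclideanSpace ℂ (Fin N) → ℂ} (hp : IsRealHomog k p) :
    Differentiable ℂ p := by
  obtain ⟨a0, S, -, hrep⟩ := hp
  have : p = fun z => ∑ α ∈ S, (a0 α : ℂ) * ∏ j, z j ^ α j := funext hrep
  rw [this]
  apply Differentiable.fun_sum
  intro α _
  exact Differentiable.const_mul
    (diff_finprod Finset.univ (fun j (z : EuclideanSpace ℂ (Fin N)) => z j ^ α j)
      (fun j _ => (diff_coord j).pow (α j))) _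

/-- Exponential decay of the FBI transform away from the carrier:
if `μ` is carried by `K_δ` (with the bound constant `C`) and `K, K′` are disjoint
compact sets, then `|F_p μ(τ,ξ)| ≤ C c_p e^{-a|ξ|}` for `τ ∈ K′`. -/
theorem stmt8 (N k : ℕ) (hN : 1 ≤ N) (hk : 1 ≤ k)
    (p : EuclideanSpace ℂ (Fin N) → ℂ) (hp : IsRealHomog k p)
    (c C : ℝ) (hc : 0 < c) (hC : 0 < C)
    (hlow : ∀ x : EuclideanSpace ℝ (Fin N), c * ‖x‖ ^ (2 * k) ≤ (p (cV x)).re)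
    (hupp : ∀ x : EuclideanSpace ℝ (Fin N), (p (cV x)).re ≤ C * ‖x‖ ^ (2 * k))
    (cp : ℝ) (hcp : 0 < cp)
    (hcpdef : cp⁻¹ = ∫ x : EuclideanSpace ℝ (Fin N), Real.exp (-(p (cV x)).re))
    (ρ c' : ℝ) (hρ : 0 < ρ) (hc' : 0 < c')
    (hcone : ∀ z : EuclideanSpace ℂ (Fin N),
      ‖imV z‖ ≤ ρ * ‖reV z‖ → c' * ‖z‖ ^ (2 * k) ≤ (p z).re)
    (K K' : Set (EuclideanSpace ℝ (Fin N))) (hK : IsCompact K) (hK' : IsCompact K')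
    (hdisj : Disjoint K K') :
    ∃ a > (0 : ℝ), ∃ δ > (0 : ℝ),
      ∀ (μ : (EuclideanSpace ℂ (Fin N) → ℂ) →ₗ[ℂ] ℂ) (Cμ : ℝ), 0 < Cμ →
        (∀ h : EuclideanSpace ℂ (Fin N) → ℂ, Differentiable ℂ h →
          ‖μ h‖ ≤ Cμ * sSup ((fun z => ‖h z‖) '' Metric.thickening δ (cV '' K))) →
        ∀ τ ∈ K', ∀ ξ : EuclideanSpace ℝ (Fin N),
          ‖(cp : ℂ) * μ (fun w => Complex.exp
              (Complex.I * dotC (cV τ - w) (cV ξ) - (‖ξ‖ : ℂ) * p (cV τ - w)))‖ ≤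
            Cμ * cp * Real.exp (-a * ‖ξ‖) := by
  obtain ⟨d, hd, hdis⟩ := hdisj.exists_thickenings hK hK'.isClosed
  have hsep : ∀ x ∈ K, ∀ τ ∈ K', d ≤ dist x τ := by
    intro x hx τ hτ
    by_contra hlt
    push_neg at hlt
    exact Set.disjoint_left.mp hdis (self_subset_thickening hd K hx)
      (mem_thickening_iff.mpr ⟨τ, hτ, hlt⟩)
  have hd2 : (0:ℝ) < d / 2 := by linarith
  have hpow : (0:ℝ) < c' * (d/2) ^ (2*k) := by positivity
  set δ : ℝ := min (min (d/2) (ρ * (d/2))) (c' * (d/2) ^ (2*k) / 2) with hδdef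
  have hδpos : 0 < δ := by
    apply lt_min (lt_min hd2 (by positivity)) (by linarith)
  have hδd2 : δ ≤ d/2 := le_trans (min_le_left _ _) (min_le_left _ _)
  have hδρ : δ ≤ ρ * (d/2) := le_trans (min_le_left _ _) (min_le_right _ _)
  have hδc : δ ≤ c' * (d/2) ^ (2*k) / 2 := min_le_right _ _
  set a : ℝ := c' * (d/2) ^ (2*k) - δ with hadef
  have ha : 0 < a := by simp only [hadef]; linarith
  refine ⟨a, ha, δ, hδpos, ?_⟩
  intro μ Cμ hCμ hbound τ hτ ξ
  set h : EuclideanSpace ℂ (Fin N) → ℂ := fun w => Complex.exp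
      (Complex.I * dotC (cV τ - w) (cV ξ) - (‖ξ‖ : ℂ) * p (cV τ - w)) with hhdef
  have hdiffh : Differentiable ℂ h := by
    apply Differentiable.cexp
    apply Differentiable.sub
    · apply Differentiable.const_mul
      have : (fun w : EuclideanSpace ℂ (Fin N) => dotC (cV τ - w) (cV ξ))
          = fun w => ∑ j, (cV τ - w) j * (cV ξ) j := by
        funext w; rfl
      rw [this]
      apply Differentiable.fun_sum
      intro j _
      exact (((differentiable_const _).sub (diff_coord j)).mul (differentiable_const _))
    · exact Differentiable.const_mul
        ((diff_p hp).comp ((differentiable_const _).sub differentiable_id)) _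
  have key : ∀ z ∈ Metric.thickening δ (cV '' K), ‖h z‖ ≤ Real.exp (-a * ‖ξ‖) := by
    intro z hz
    obtain ⟨w, ⟨x, hxK, rfl⟩, hzw⟩ := mem_thickening_iff.mp hz
    set v : EuclideanSpace ℂ (Fin N) := cV τ - z with hvdef
    have hzx : ‖z - cV x‖ < δ := by
      rw [← dist_eq_norm]; exact hzw
    have him : ‖imV v‖ < δ := by
      have h1 : imV v = -(imV (z - cV x)) := by
        rw [hvdef, imV_sub, imV_sub, imV_cV, imV_cV]; abel
      calc ‖imV v‖ = ‖imV (z - cV x)‖ := by rw [h1, norm_neg]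
        _ ≤ ‖z - cV x‖ := norm_imV_le _
        _ < δ := hzx
    have hre : d/2 ≤ ‖reV v‖ := by
      have h1 : reV v = τ - reV z := by rw [hvdef, reV_sub, reV_cV]
      have h2 : ‖reV z - x‖ < δ := by
        calc ‖reV z - x‖ = ‖reV (z - cV x)‖ := by rw [reV_sub, reV_cV]
          _ ≤ ‖z - cV x‖ := norm_reV_le _
          _ < δ := hzx
      have h3 : d ≤ ‖τ - x‖ := by
        rw [norm_sub_rev, ← dist_eq_norm]; exact hsep x hxK τ hτ
      have h4 : ‖τ - x‖ ≤ ‖τ - reV z‖ + ‖reV z - x‖ := norm_sub_le_norm_sub_add_norm_sub τ (reV z) x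
      rw [h1]
      linarith
    have hnv : d/2 ≤ ‖v‖ := le_trans hre (norm_reV_le v)
    have hconeh : ‖imV v‖ ≤ ρ * ‖reV v‖ := by
      calc ‖imV v‖ ≤ δ := him.le
        _ ≤ ρ * (d/2) := hδρ
        _ ≤ ρ * ‖reV v‖ := by
            apply mul_le_mul_of_nonneg_left hre hρ.le
    have hpv : c' * (d/2) ^ (2*k) ≤ (p v).re := by
      refine le_trans ?_ (hcone v hconeh)
      apply mul_le_mul_of_nonneg_left _ hc'.le
      exact pow_le_pow_left₀ hd2.le hnv _
    have hnh : ‖h z‖ = Real.exp ((Complex.I * dotC v (cV ξ) - (‖ξ‖:ℂ) * p v).re) := by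
      rw [hhdef]
      simp [Complex.norm_exp, hvdef]
    rw [hnh]
    apply Real.exp_le_exp.mpr
    have hre1 : (Complex.I * dotC v (cV ξ) - (‖ξ‖:ℂ) * p v).re
        = (Complex.I * dotC v (cV ξ)).re - ‖ξ‖ * (p v).re := by
      simp
    rw [hre1]
    have e1 : (Complex.I * dotC v (cV ξ)).re ≤ δ * ‖ξ‖ :=
      (re_I_dotC v ξ).trans (mul_le_mul_of_nonneg_right him.le (norm_nonneg _))
    have e2 : ‖ξ‖ * (c' * (d/2) ^ (2*k)) ≤ ‖ξ‖ * (p v).re :=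
      mul_le_mul_of_nonneg_left hpv (norm_nonneg _)
    have : -a * ‖ξ‖ = δ * ‖ξ‖ - ‖ξ‖ * (c' * (d/2) ^ (2*k)) := by
      rw [hadef]; ring
    rw [this]
    linarith
  have hsup : sSup ((fun z => ‖h z‖) '' Metric.thickening δ (cV '' K))
      ≤ Real.exp (-a * ‖ξ‖) := by
    apply Real.sSup_le _ (Real.exp_pos _).le
    rintro r ⟨z, hz, rfl⟩
    exact key z hz
  have hμ : ‖μ h‖ ≤ Cμ * Real.exp (-a * ‖ξ‖) :=
    (hbound h hdiffh).trans (mul_le_mul_of_nonneg_left hsup hCμ.le)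
  calc ‖(cp : ℂ) * μ h‖ = cp * ‖μ h‖ := by
        rw [norm_mul, Complex.norm_real, Real.norm_of_nonneg hcp.le]
    _ ≤ cp * (Cμ * Real.exp (-a * ‖ξ‖)) := mul_le_mul_of_nonneg_left hμ hcp.le
    _ = Cμ * cp * Real.exp (-a * ‖ξ‖) := by ring
end
end
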